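/- arXiv:2403.10155 — 12 statements merged into one kernel-verified Lean document; each statement's English description precedes it below -/
import Mathlib

section
/- Let $m \ge 2$ be an integer and let $b_1, \dots, b_m$ be real numbers with $\sum_{i=1}^m b_i = 0$. Then $-\frac{m-2}{\sqrt{m(m-1)}}\left(\sum_{i=1}^m b_i^2\right)^{3/2} \le \sum_{i=1}^m b_i^3 \le \frac{m-2}{\sqrt{m(m-1)}}\left(\sum_{i=1}^m b_i^2\right)^{3/2}$. -/
lemma okumura_upper (m : ℕ) (hm : 2 ≤ m) (b : Fin m → ℝ)
    (hsum : ∑ i, b i = 0) :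
    ∑ i, (b i) ^ 3 ≤
      (((m : ℝ) - 2) / Real.sqrt ((m : ℝ) * ((m : ℝ) - 1))) *
        (∑ i, (b i) ^ 2) ^ ((3 : ℝ) / 2) := by
  have hm' : (2:ℝ) ≤ (m:ℝ) := by exact_mod_cast hm
  set S : ℝ := ∑ i, (b i) ^ 2 with hSdef
  have hSnn : 0 ≤ S := Finset.sum_nonneg fun i _ => sq_nonneg _
  have hQpos : 0 < (m:ℝ) * ((m:ℝ) - 1) := by nlinarith
  have hQs : 0 < Real.sqrt ((m:ℝ) * ((m:ℝ) - 1)) := Real.sqrt_pos.mpr hQpos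
  rcases eq_or_lt_of_le hSnn with hS0 | hSpos
  · have hb : ∀ i ∈ Finset.univ, (b i)^2 = 0 := by
      intro i _
      have := (Finset.sum_eq_zero_iff_of_nonneg (fun i _ => sq_nonneg (b i))).mp hS0.symm
      exact this i (Finset.mem_univ i)
    have hb' : ∀ i, b i = 0 := fun i => by
      have := hb i (Finset.mem_univ i); nlinarith [this]
    simp [hb', ← hS0, Real.zero_rpow (by norm_num : ((3:ℝ)/2) ≠ 0)]
  · set s : ℝ := Real.sqrt (S / ((m:ℝ) * ((m:ℝ)-1))) with hsdef
    have hspos : 0 < s := Real.sqrt_pos.mpr (div_pos hSpos hQpos)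
    have hs2 : s^2 = S / ((m:ℝ) * ((m:ℝ)-1)) := Real.sq_sqrt (le_of_lt (div_pos hSpos hQpos))
    have hs2' : s^2 * ((m:ℝ) * ((m:ℝ)-1)) = S := by
      rw [hs2]; exact div_mul_cancel₀ _ (ne_of_gt hQpos)
    -- Step 1 : each b i ≤ (m-1) s
    have hbound : ∀ i, b i ≤ ((m:ℝ)-1) * s := by
      intro i
      have herase : ∑ j ∈ Finset.univ.erase i, b j = - b i := by
        rw [Finset.sum_erase_eq_sub (Finset.mem_univ i), hsum]; ring
      have hcs := sq_sum_le_card_mul_sum_sq (s := Finset.univ.erase i) (f := b)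
      have hcard : ((Finset.univ.erase i).card : ℝ) = (m:ℝ) - 1 := by
        rw [Finset.card_erase_of_mem (Finset.mem_univ i), Finset.card_univ, Fintype.card_fin]
        have : (1:ℕ) ≤ m := by omega
        push_cast [Nat.cast_sub this]
        ring
      have herase2 : ∑ j ∈ Finset.univ.erase i, (b j)^2 = S - (b i)^2 := by
        rw [Finset.sum_erase_eq_sub (Finset.mem_univ i), hSdef]
      rw [herase, hcard, herase2] at hcs
      -- hcs : (-b i)^2 ≤ (m-1) * (S - b i^2)
      have hsq : (b i)^2 ≤ (((m:ℝ)-1)*s)^2 := by nlinarith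
      have h1 : (0:ℝ) ≤ ((m:ℝ)-1)*s := by nlinarith [hspos.le]
      nlinarith [hsq, h1]
    -- Step 2 : pointwise cubic inequality
    have hpt : ∀ i, (b i)^3 ≤ ((m:ℝ)-3)*s*(b i)^2 + (2*(m:ℝ)-3)*s^2*(b i) + ((m:ℝ)-1)*s^3 := by
      intro i
      have h1 := hbound i
      nlinarith [sq_nonneg (b i + s), mul_nonneg (sq_nonneg (b i + s)) (sub_nonneg.mpr h1)]
    have hsum3 : ∑ i, (b i)^3 ≤ ((m:ℝ)-2) * s * S := by
      have := Finset.sum_le_sum (fun i (_ : i ∈ Finset.univ) => hpt i)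
      have hrhs : ∑ i : Fin m, (((m:ℝ)-3)*s*(b i)^2 + (2*(m:ℝ)-3)*s^2*(b i) + ((m:ℝ)-1)*s^3)
          = ((m:ℝ)-3)*s*S + ((m:ℝ)-1)*s^3*(m:ℝ) := by
        simp only [Finset.sum_add_distrib, ← Finset.mul_sum, hsum, ← hSdef,
          Finset.sum_const, Finset.card_univ, Fintype.card_fin, nsmul_eq_mul]
        ring
      rw [hrhs] at this
      nlinarith [this, hs2']
    -- Step 3 : rewrite RHS
    have hrw : (((m : ℝ) - 2) / Real.sqrt ((m : ℝ) * ((m : ℝ) - 1))) * S ^ ((3 : ℝ) / 2)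
        = ((m:ℝ)-2) * s * S := by
      have h32 : S ^ ((3:ℝ)/2) = S * Real.sqrt S := by
        rw [show (3:ℝ)/2 = 1 + 1/2 by norm_num, Real.rpow_add hSpos, Real.rpow_one,
          ← Real.sqrt_eq_rpow]
      have hsS : Real.sqrt S = s * Real.sqrt ((m:ℝ)*((m:ℝ)-1)) := by
        rw [hsdef, Real.sqrt_div hSnn, div_mul_cancel₀ _ (ne_of_gt hQs)]
      rw [h32, hsS]
      rw [show (((m:ℝ)-2) / Real.sqrt ((m:ℝ)*((m:ℝ)-1))) * (S * (s * Real.sqrt ((m:ℝ)*((m:ℝ)-1))))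
          = ((m:ℝ)-2) * s * S * (Real.sqrt ((m:ℝ)*((m:ℝ)-1)) / Real.sqrt ((m:ℝ)*((m:ℝ)-1))) by ring,
        div_self (ne_of_gt hQs), mul_one]
    rw [hrw]; exact hsum3


/-- Okumura's Lemma: for real numbers `b 1, ..., b m` summing to zero,
`-(m-2)/√(m(m-1)) (∑ bᵢ²)^{3/2} ≤ ∑ bᵢ³ ≤ (m-2)/√(m(m-1)) (∑ bᵢ²)^{3/2}`. -/
theorem okumura_lemma (m : ℕ) (hm : 2 ≤ m) (b : Fin m → ℝ)
    (hsum : ∑ i, b i = 0) :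
    -(((m : ℝ) - 2) / Real.sqrt ((m : ℝ) * ((m : ℝ) - 1))) *
        (∑ i, (b i) ^ 2) ^ ((3 : ℝ) / 2) ≤ ∑ i, (b i) ^ 3 ∧
    ∑ i, (b i) ^ 3 ≤
      (((m : ℝ) - 2) / Real.sqrt ((m : ℝ) * ((m : ℝ) - 1))) *
        (∑ i, (b i) ^ 2) ^ ((3 : ℝ) / 2) := by
  have hupper := okumura_upper m hm b hsum
  have hneg : ∑ i, (-b i) = 0 := by
    rw [Finset.sum_neg_distrib, hsum, neg_zero]
  have hlower := okumura_upper m hm (fun i => -b i) hneg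
  have h2 : ∑ i, (-b i)^2 = ∑ i, (b i)^2 := by
    apply Finset.sum_congr rfl; intro i _; ring
  have h3 : ∑ i, (-b i)^3 = -∑ i, (b i)^3 := by
    rw [← Finset.sum_neg_distrib]
    apply Finset.sum_congr rfl; intro i _; ring
  simp only [h2, h3] at hlower
  constructor
  · linarith
  · exact hupper
end

section
/- Let $m \ge 2$ be an integer, $r > 0$, $\lambda \in \mathbb{R}$, and $r_1, r_2 \in (0, r)$ with $r_1^2 + r_2^2 = r^2$. Then the two conditions $-\frac{r_2}{r_1}(m-1) + \frac{r_1}{r_2} \ne 0$ and $\frac{r_2^2}{r_1^2}(m-1) + \frac{r_1^2}{r_2^2} = m - \lambda r^2$ hold simultaneously if and only if one of the following three cases holds: (1) $m > 2$, $\lambda = (m - 2\sqrt{m-1})/r^2$, $r_1^2 = \frac{m-1-\sqrt{m-1}}{m-2} r^2$ and $r_2^2 = \frac{\sqrt{m-1}-1}{m-2} r^2$; (2) $\lambda < (m - 2\sqrt{m-1})/r^2$, $\lambda \ne 0$, and for a consistent choice of sign, $r_1^2 = \frac{3m - 2 - \lambda r^2 \mp \sqrt{(m - \lambda r^2)^2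 - 4(m-1)}}{2(2m - \lambda r^2)} r^2$ and $r_2^2 = \frac{m + 2 - \lambda r^2 \pm \sqrt{(m - \lambda r^2)^2 - 4(m-1)}}{2(2m - \lambda r^2)} r^2$; (3) $m > 2$, $\lambda = 0$, and $r_1^2 = r_2^2 = r^2/2$. -/
set_option maxHeartbeats 1000000 in
lemma core_classification (M s x y R : ℝ) (hM : 2 ≤ M)
    (hx : 0 < x) (hy : 0 < y) (hR : 0 < R) (hxy : x + y = R) :
    (x ≠ (M - 1) * y ∧ x * x + (M - 1) * (y * y) = (M - s) * (x * y)) ↔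
    ((2 < M ∧ s = M - 2 * Real.sqrt (M - 1) ∧
        x = ((M - 1 - Real.sqrt (M - 1)) / (M - 2)) * R ∧
        y = ((Real.sqrt (M - 1) - 1) / (M - 2)) * R) ∨
     (s < M - 2 * Real.sqrt (M - 1) ∧ s ≠ 0 ∧
        ((x = ((3 * M - 2 - s - Real.sqrt ((M - s) ^ 2 - 4 * (M - 1))) /
              (2 * (2 * M - s))) * R ∧
          y = ((M + 2 - s + Real.sqrt ((M - s) ^ 2 - 4 * (M - 1))) /
              (2 * (2 * M - s))) * R) ∨
         (x = ((3 * M - 2 - s + Real.sqrt ((M - s) ^ 2 - 4 * (M - 1))) /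
              (2 * (2 * M - s))) * R ∧
          y = ((M + 2 - s - Real.sqrt ((M - s) ^ 2 - 4 * (M - 1))) /
              (2 * (2 * M - s))) * R))) ∨
     (2 < M ∧ s = 0 ∧ x = R / 2 ∧ y = R / 2)) := by
  have hM1 : (1:ℝ) ≤ M - 1 := by linarith
  have hc2 : Real.sqrt (M - 1) ^ 2 = M - 1 := Real.sq_sqrt (by linarith)
  have hc1 : 1 ≤ Real.sqrt (M - 1) := by
    nlinarith [Real.sqrt_nonneg (M - 1), hc2]
  set c := Real.sqrt (M - 1) with hcdef
  clear_value c
  have hd0 : 0 ≤ Real.sqrt ((M - s) ^ 2 - 4 * (M - 1)) := Real.sqrt_nonneg _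
  constructor
  · rintro ⟨hne, heq⟩
    have hMs : 0 < M - s := by
      nlinarith [mul_pos hx hy, mul_pos hx hx, mul_pos hy hy]
    have key : (2 * x - (M - s) * y) ^ 2 = ((M - s) ^ 2 - 4 * (M - 1)) * y ^ 2 := by
      linear_combination 4 * heq
    have hD : 0 ≤ (M - s) ^ 2 - 4 * (M - 1) := by
      nlinarith [key, sq_nonneg (2 * x - (M - s) * y), mul_pos hy hy]
    have hd2 : Real.sqrt ((M - s) ^ 2 - 4 * (M - 1)) ^ 2 = (M - s) ^ 2 - 4 * (M - 1) :=
      Real.sq_sqrt hD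
    set d := Real.sqrt ((M - s) ^ 2 - 4 * (M - 1)) with hddef
    clear_value d
    rcases eq_or_lt_of_le hD with hD0 | hDpos
    · -- D = 0 case
      have hMs2c : M - s = 2 * c := by
        have h1 : (M - s - 2 * c) * (M - s + 2 * c) = 0 := by
          linear_combination (-4 : ℝ) * hc2 - hD0
        rcases mul_eq_zero.mp h1 with h | h
        · linarith
        · linarith
      have hzero : 2 * x - (M - s) * y = 0 := by
        have h0 : (2 * x - (M - s) * y) ^ 2 = 0 := by rw [key, ← hD0]; ring
        exact (pow_eq_zero_iff two_ne_zero).mp h0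
      have hxcy : x = c * y := by
        linear_combination hzero / 2 + (y / 2) * hMs2c
      have hMne2 : 2 < M := by
        rcases lt_or_eq_of_le hM1 with h | h
        · linarith
        · exfalso
          have h1 : (c - 1) * (c + 1) = 0 := by linear_combination hc2 - h
          have hceq : c = 1 := by
            rcases mul_eq_zero.mp h1 with h2 | h2
            · linarith
            · linarith
          apply hne
          rw [hxcy, hceq, ← h]
      have hM2ne : M - 2 ≠ 0 := ne_of_gt (by linarith)
      left
      refine ⟨hMne2, by linarith, ?_, ?_⟩
      · rw [div_mul_eq_mul_div, eq_div_iff hM2ne]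
        linear_combination (M - 1 - c) * hxy + (c - 1) * hxcy + y * hc2
      · rw [div_mul_eq_mul_div, eq_div_iff hM2ne]
        linear_combination (c - 1) * hxy + (1 - c) * hxcy - y * hc2
    · -- D > 0 case
      have hdpos : 0 < d := by
        rw [hddef]
        exact Real.sqrt_pos.mpr hDpos
      have hslt : s < M - 2 * c := by nlinarith [hDpos, hc2, hMs, hc1]
      by_cases hs0 : s = 0
      · -- s = 0
        right; right
        have hfac : (x - y) * (x - (M - 1) * y) = 0 := by
          linear_combination heq - x * y * hs0
        rcases mul_eq_zero.mp hfac with h | h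
        · have hxey : x = y := by linarith
          have hM2 : 2 < M := by nlinarith [hDpos, hs0]
          exact ⟨hM2, hs0, by linarith, by linarith⟩
        · exact absurd (by linarith : x = (M - 1) * y) hne
      · right; left
        refine ⟨hslt, hs0, ?_⟩
        have hfac : (2 * x - (M - s) * y - d * y) * (2 * x - (M - s) * y + d * y) = 0 := by
          linear_combination key - y ^ 2 * hd2
        have h2Ms : (0:ℝ) < 2 * (2 * M - s) := by nlinarith
        have h2Msne : 2 * (2 * M - s) ≠ 0 := ne_of_gt h2Ms
        rcases mul_eq_zero.mp hfac with h | h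
        · -- 2x = (M-s+d) y : larger root, option B
          have hlin : 2 * x = (M - s + d) * y := by linarith
          right
          constructor
          · rw [div_mul_eq_mul_div, eq_div_iff h2Msne]
            linear_combination ((M - s - d + 2) / 2) * hlin + (3 * M - s + d - 2) * hxy
              - (y / 2) * hd2
          · rw [div_mul_eq_mul_div, eq_div_iff h2Msne]
            linear_combination (-((M - s - d + 2) / 2)) * hlin + (M - s - d + 2) * hxy
              + (y / 2) * hd2
        · -- 2x = (M-s-d) y : smaller root, option A
          have hlin : 2 * x = (M - s - d) * y := by linarith
          left
          constructor
          · rw [div_mul_eq_mul_div, eq_div_iff h2Msne]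
            linear_combination ((M - s + d + 2) / 2) * hlin + (3 * M - s - d - 2) * hxy
              - (y / 2) * hd2
          · rw [div_mul_eq_mul_div, eq_div_iff h2Msne]
            linear_combination (-((M - s + d + 2) / 2)) * hlin + (M - s + d + 2) * hxy
              + (y / 2) * hd2
  · have hd2' : ∀ _ : s < M - 2 * c, Real.sqrt ((M - s) ^ 2 - 4 * (M - 1)) ^ 2
        = (M - s) ^ 2 - 4 * (M - 1) := by
      intro hslt
      exact Real.sq_sqrt (by nlinarith [hc2, hc1])
    set d := Real.sqrt ((M - s) ^ 2 - 4 * (M - 1)) with hddef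
    rintro (⟨hM2, hs, hx1, hy1⟩ | ⟨hslt, hs0, hopt⟩ | ⟨hM2, hs0, hx1, hy1⟩)
    · -- case 1
      have hc1' : 1 < c := by nlinarith [hc2]
      have hM2ne : M - 2 ≠ 0 := ne_of_gt (by linarith)
      have hxcy : x = c * y := by
        have hcc : M - 1 - c = c * (c - 1) := by linear_combination (-1 : ℝ) * hc2
        rw [hx1, hy1, hcc]
        ring
      constructor
      · rw [hxcy]
        intro h
        have h2 : c = M - 1 := mul_right_cancel₀ (ne_of_gt hy) h
        nlinarith [hc2, hc1']
      · rw [hxcy, hs]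
        linear_combination (-(y * y)) * hc2
    · -- case 2
      have hMs : 2 * c < M - s := by linarith
      have hDpos : 0 < (M - s) ^ 2 - 4 * (M - 1) := by nlinarith [hc2, hc1]
      have hd2 : d ^ 2 = (M - s) ^ 2 - 4 * (M - 1) := hd2' hslt
      have hdpos : 0 < d := by rw [hddef]; exact Real.sqrt_pos.mpr hDpos
      have h2Ms : (0:ℝ) < 2 * (2 * M - s) := by nlinarith
      have h2Msne : 2 * (2 * M - s) ≠ 0 := ne_of_gt h2Ms
      clear_value d
      rcases hopt with ⟨hx1, hy1⟩ | ⟨hx1, hy1⟩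
      · -- option A : 2x = (M-s-d) y
        have hx1' : x * (2 * (2 * M - s)) = (3 * M - 2 - s - d) * R := by
          rw [hx1, div_mul_eq_mul_div, div_mul_cancel₀ _ h2Msne]
        have hy1' : y * (2 * (2 * M - s)) = (M + 2 - s + d) * R := by
          rw [hy1, div_mul_eq_mul_div, div_mul_cancel₀ _ h2Msne]
        have hlin : 2 * x = (M - s - d) * y := by
          have hbig : (2 * x) * (2 * (2 * M - s)) = ((M - s - d) * y) * (2 * (2 * M - s)) := by
            linear_combination 2 * hx1' - (M - s - d) * hy1' + R * hd2
          exact mul_right_cancel₀ h2Msne hbig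
        have hxv : x = (M - s - d) / 2 * y := by linarith
        constructor
        · intro h
          have h1 : M - s - d = 2 * (M - 1) := by
            have h2 : ((M - s - d) / 2) * y = (M - 1) * y := by rw [← hxv, h]
            have h3 := mul_right_cancel₀ (ne_of_gt hy) h2
            linarith
          have h3 : 4 * (M - 1) * s = 0 := by
            linear_combination (2 + d - s - M) * h1 + hd2
          rcases mul_eq_zero.mp h3 with h4 | h4
          · linarith
          · exact hs0 h4
        · rw [hxv]
          linear_combination (y ^ 2 / 4) * hd2
      · -- option B : 2x = (M-s+d) y
        have hx1' : x * (2 * (2 * M - s)) = (3 * M - 2 - s + d) * R := by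
          rw [hx1, div_mul_eq_mul_div, div_mul_cancel₀ _ h2Msne]
        have hy1' : y * (2 * (2 * M - s)) = (M + 2 - s - d) * R := by
          rw [hy1, div_mul_eq_mul_div, div_mul_cancel₀ _ h2Msne]
        have hlin : 2 * x = (M - s + d) * y := by
          have hbig : (2 * x) * (2 * (2 * M - s)) = ((M - s + d) * y) * (2 * (2 * M - s)) := by
            linear_combination 2 * hx1' - (M - s + d) * hy1' + R * hd2
          exact mul_right_cancel₀ h2Msne hbig
        have hxv : x = (M - s + d) / 2 * y := by linarith
        constructor
        · intro h
          have h1 : M - s + d = 2 * (M - 1) := by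
            have h2 : ((M - s + d) / 2) * y = (M - 1) * y := by rw [← hxv, h]
            have h3 := mul_right_cancel₀ (ne_of_gt hy) h2
            linarith
          have h3 : 4 * (M - 1) * s = 0 := by
            linear_combination (2 - d - s - M) * h1 + hd2
          rcases mul_eq_zero.mp h3 with h4 | h4
          · linarith
          · exact hs0 h4
        · rw [hxv]
          linear_combination (y ^ 2 / 4) * hd2
    · -- case 3
      constructor
      · rw [hx1, hy1]
        intro h
        nlinarith [hR]
      · rw [hx1, hy1, hs0]
        ring


/-- Classification of proper `λ`-biharmonic extrinsic products
`𝕊^{m-1}(r₁) × 𝕊^1(r₂) ⊂ 𝕊^{m+1}(r)`: the two displayed algebraic conditions hold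
simultaneously iff one of three cases holds. -/
theorem lambda_biharmonic_product_classification
    (m : ℕ) (hm : 2 ≤ m) (r l r1 r2 : ℝ) (hr : 0 < r)
    (hr1 : r1 ∈ Set.Ioo 0 r) (hr2 : r2 ∈ Set.Ioo 0 r)
    (hsum : r1 ^ 2 + r2 ^ 2 = r ^ 2) :
    (-(r2 / r1) * ((m : ℝ) - 1) + r1 / r2 ≠ 0 ∧
      (r2 ^ 2 / r1 ^ 2) * ((m : ℝ) - 1) + r1 ^ 2 / r2 ^ 2 = (m : ℝ) - l * r ^ 2) ↔
    ((2 < m ∧ l = ((m : ℝ) - 2 * Real.sqrt ((m : ℝ) - 1)) / r ^ 2 ∧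
        r1 ^ 2 = (((m : ℝ) - 1 - Real.sqrt ((m : ℝ) - 1)) / ((m : ℝ) - 2)) * r ^ 2 ∧
        r2 ^ 2 = ((Real.sqrt ((m : ℝ) - 1) - 1) / ((m : ℝ) - 2)) * r ^ 2) ∨
     (l < ((m : ℝ) - 2 * Real.sqrt ((m : ℝ) - 1)) / r ^ 2 ∧ l ≠ 0 ∧
        ((r1 ^ 2 = ((3 * (m : ℝ) - 2 - l * r ^ 2 -
              Real.sqrt (((m : ℝ) - l * r ^ 2) ^ 2 - 4 * ((m : ℝ) - 1))) /
              (2 * (2 * (m : ℝ) - l * r ^ 2))) * r ^ 2 ∧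
          r2 ^ 2 = (((m : ℝ) + 2 - l * r ^ 2 +
              Real.sqrt (((m : ℝ) - l * r ^ 2) ^ 2 - 4 * ((m : ℝ) - 1))) /
              (2 * (2 * (m : ℝ) - l * r ^ 2))) * r ^ 2) ∨
         (r1 ^ 2 = ((3 * (m : ℝ) - 2 - l * r ^ 2 +
              Real.sqrt (((m : ℝ) - l * r ^ 2) ^ 2 - 4 * ((m : ℝ) - 1))) /
              (2 * (2 * (m : ℝ) - l * r ^ 2))) * r ^ 2 ∧
          r2 ^ 2 = (((m : ℝ) + 2 - l * r ^ 2 -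
              Real.sqrt (((m : ℝ) - l * r ^ 2) ^ 2 - 4 * ((m : ℝ) - 1))) /
              (2 * (2 * (m : ℝ) - l * r ^ 2))) * r ^ 2))) ∨
     (2 < m ∧ l = 0 ∧ r1 ^ 2 = r ^ 2 / 2 ∧ r2 ^ 2 = r ^ 2 / 2)) := by
  have hR : (0:ℝ) < r ^ 2 := by positivity
  have hRne : (r:ℝ) ^ 2 ≠ 0 := ne_of_gt hR
  have hx : 0 < r1 ^ 2 := pow_pos hr1.1 2
  have hy : 0 < r2 ^ 2 := pow_pos hr2.1 2
  have hr1n : r1 ≠ 0 := ne_of_gt hr1.1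
  have hr2n : r2 ≠ 0 := ne_of_gt hr2.1
  have hA : (-(r2 / r1) * ((m : ℝ) - 1) + r1 / r2 ≠ 0) ↔
      r1 ^ 2 ≠ ((m : ℝ) - 1) * r2 ^ 2 := by
    have e : -(r2 / r1) * ((m : ℝ) - 1) + r1 / r2
        = (r1 ^ 2 - ((m : ℝ) - 1) * r2 ^ 2) / (r1 * r2) := by
      field_simp
      ring
    rw [e, div_ne_zero_iff, sub_ne_zero]
    simp [hr1n, hr2n, mul_ne_zero hr1n hr2n]
  have hB : ((r2 ^ 2 / r1 ^ 2) * ((m : ℝ) - 1) + r1 ^ 2 / r2 ^ 2 = (m : ℝ) - l * r ^ 2) ↔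
      r1 ^ 2 * r1 ^ 2 + ((m : ℝ) - 1) * (r2 ^ 2 * r2 ^ 2)
        = ((m : ℝ) - l * r ^ 2) * (r1 ^ 2 * r2 ^ 2) := by
    have h1 : (r1:ℝ) ^ 2 ≠ 0 := pow_ne_zero 2 hr1n
    have h2 : (r2:ℝ) ^ 2 ≠ 0 := pow_ne_zero 2 hr2n
    rw [div_mul_eq_mul_div, div_add_div _ _ h1 h2, div_eq_iff (mul_ne_zero h1 h2)]
    constructor <;> intro h <;> linear_combination h
  rw [hA, hB]
  have key := core_classification (m : ℝ) (l * r ^ 2) (r1 ^ 2) (r2 ^ 2) (r ^ 2)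
    (by exact_mod_cast hm) hx hy hR hsum
  rw [key]
  have em : ((2:ℝ) < (m:ℝ)) ↔ 2 < m := by exact_mod_cast Iff.rfl
  have e2 : (l * r ^ 2 = (m : ℝ) - 2 * Real.sqrt ((m : ℝ) - 1)) ↔
      (l = ((m : ℝ) - 2 * Real.sqrt ((m : ℝ) - 1)) / r ^ 2) := (eq_div_iff hRne).symm
  have e3 : (l * r ^ 2 < (m : ℝ) - 2 * Real.sqrt ((m : ℝ) - 1)) ↔
      (l < ((m : ℝ) - 2 * Real.sqrt ((m : ℝ) - 1)) / r ^ 2) := (lt_div_iff₀ hR).symm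
  have e4 : (l * r ^ 2 = 0) ↔ (l = 0) := by
    rw [mul_eq_zero]
    simp [hRne]
  rw [em, e2, e3, e4]
  simp only [ne_eq, e4]
end

section
/- Let $m > 2$ be an integer, $r > 0$, $\lambda \in \mathbb{R}$, and let $x > 0$ satisfy $m^4 x^2 + m^2\left(m\lambda - \frac{(m-2)^2}{r^2}\right)x + (m-1)\lambda^2 = 0$. Define $\sigma = \frac{\sqrt{4m^2 x + r^2 \lambda^2}}{m^2 r}$, $\theta = x + \sigma$ and $\omega = x - (m-1)\sigma$. Then $x\left(\frac{m}{r^2} - \lambda - m\theta\right) = \omega(\omega - \theta)$. -/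
/-- With `σ = √(4m²x + r²λ²)/(m²r)`, `θ = x + σ`, `ω = x - (m-1)σ` and `x > 0` a root
of the governing quadratic, one has `x(m/r² - λ - mθ) = ω(ω - θ)`. -/
theorem kappa_identity (m : ℕ) (hm : 2 < m) (r l x : ℝ) (hr : 0 < r) (hx : 0 < x)
    (hroot : (m : ℝ) ^ 4 * x ^ 2 +
        (m : ℝ) ^ 2 * ((m : ℝ) * l - ((m : ℝ) - 2) ^ 2 / r ^ 2) * x +
        ((m : ℝ) - 1) * l ^ 2 = 0)
    (σ θ ω : ℝ)
    (hσ : σ = Real.sqrt (4 * (m : ℝ) ^ 2 * x + r ^ 2 * l ^ 2) / ((m : ℝ) ^ 2 * r))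
    (hθ : θ = x + σ) (hω : ω = x - ((m : ℝ) - 1) * σ) :
    x * ((m : ℝ) / r ^ 2 - l - (m : ℝ) * θ) = ω * (ω - θ) := by
  have hm0 : (0:ℝ) < (m:ℝ) := by positivity
  have hr0 : r ≠ 0 := ne_of_gt hr
  have hmne : (m:ℝ) ≠ 0 := ne_of_gt hm0
  have hs : σ ^ 2 = (4 * (m : ℝ) ^ 2 * x + r ^ 2 * l ^ 2) / ((m : ℝ) ^ 2 * r) ^ 2 := by
    rw [hσ, div_pow, Real.sq_sqrt (by positivity)]
  subst hθ hω
  have h2 : (m:ℝ)^3 ≠ 0 := pow_ne_zero _ hmne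
  field_simp at hs hroot ⊢
  linear_combination (norm := (field_simp; ring)) (-(1:ℝ)/(m:ℝ)^3) * hroot - (((m:ℝ)-1)/((m:ℝ)^3)) * hs
end

section
/- Let $m_1, m_2 \ge 2$ be integers, $m = m_1 + m_2$, and $r_1, r_2 \in (0,1)$ with $r_1^2 + r_2^2 = 1$. Set $\lambda_1 = 2 r_2^2\left(\frac{m_1}{r_1^2} - \frac{m_2}{r_2^2}\right)$ and $\lambda_2 = 2 r_1^2\left(\frac{m_2}{r_2^2} - \frac{m_1}{r_1^2}\right)$. Then $\lambda_1 \le \frac{m_1 - 2\sqrt{m_1 - 1}}{r_1^2}$ and $\lambda_2 \le \frac{m_2 - 2\sqrt{m_2 - 1}}{r_2^2}$ if and only if $\frac{m_1 + 2\sqrt{m_1 - 1}}{2m} \le r_1^2 \le \frac{2m_1 + m_2 - 2\sqrt{m_2 - 1}}{2m}$ (equivalently, $\frac{m_2 + 2\sqrt{m_2 - 1}}{2m} \le r_2^2 \le \frac{m_1 + 2m_2 - 2\sqrt{m_1 - 1}}{2m}$). -/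
set_option maxHeartbeats 1000000 in
/-- Translation of the conditions `λᵢ ≤ (mᵢ - 2√(mᵢ-1))/rᵢ²` into the more
restrictive constraints on the radii. -/
theorem radii_constraints_PMC (m1 m2 : ℕ) (hm1 : 2 ≤ m1) (hm2 : 2 ≤ m2)
    (r1 r2 : ℝ) (hr1 : r1 ∈ Set.Ioo (0 : ℝ) 1) (hr2 : r2 ∈ Set.Ioo (0 : ℝ) 1)
    (hsum : r1 ^ 2 + r2 ^ 2 = 1)
    (l1 l2 : ℝ)
    (hl1 : l1 = 2 * r2 ^ 2 * ((m1 : ℝ) / r1 ^ 2 - (m2 : ℝ) / r2 ^ 2))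
    (hl2 : l2 = 2 * r1 ^ 2 * ((m2 : ℝ) / r2 ^ 2 - (m1 : ℝ) / r1 ^ 2)) :
    ((l1 ≤ ((m1 : ℝ) - 2 * Real.sqrt ((m1 : ℝ) - 1)) / r1 ^ 2 ∧
        l2 ≤ ((m2 : ℝ) - 2 * Real.sqrt ((m2 : ℝ) - 1)) / r2 ^ 2) ↔
      (((m1 : ℝ) + 2 * Real.sqrt ((m1 : ℝ) - 1)) / (2 * ((m1 : ℝ) + m2)) ≤ r1 ^ 2 ∧
        r1 ^ 2 ≤ (2 * (m1 : ℝ) + m2 - 2 * Real.sqrt ((m2 : ℝ) - 1)) /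
          (2 * ((m1 : ℝ) + m2)))) ∧
    ((l1 ≤ ((m1 : ℝ) - 2 * Real.sqrt ((m1 : ℝ) - 1)) / r1 ^ 2 ∧
        l2 ≤ ((m2 : ℝ) - 2 * Real.sqrt ((m2 : ℝ) - 1)) / r2 ^ 2) ↔
      (((m2 : ℝ) + 2 * Real.sqrt ((m2 : ℝ) - 1)) / (2 * ((m1 : ℝ) + m2)) ≤ r2 ^ 2 ∧
        r2 ^ 2 ≤ ((m1 : ℝ) + 2 * (m2 : ℝ) - 2 * Real.sqrt ((m1 : ℝ) - 1)) /
          (2 * ((m1 : ℝ) + m2)))) := by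
  obtain ⟨hr1a, hr1b⟩ := hr1
  obtain ⟨hr2a, hr2b⟩ := hr2
  have hx : (0 : ℝ) < r1 ^ 2 := by positivity
  have hy : (0 : ℝ) < r2 ^ 2 := by positivity
  have hm1' : (2 : ℝ) ≤ (m1 : ℝ) := by exact_mod_cast hm1
  have hm2' : (2 : ℝ) ≤ (m2 : ℝ) := by exact_mod_cast hm2
  have hM : (0 : ℝ) < 2 * ((m1 : ℝ) + m2) := by positivity
  set s1 := Real.sqrt ((m1 : ℝ) - 1) with hs1
  set s2 := Real.sqrt ((m2 : ℝ) - 1) with hs2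
  -- products of the λ's with the denominators
  have e1 : l1 * r1 ^ 2 = 2 * r2 ^ 2 * (m1 : ℝ) - 2 * (m2 : ℝ) * r1 ^ 2 := by
    rw [hl1]; field_simp
  have e2 : l2 * r2 ^ 2 = 2 * r1 ^ 2 * (m2 : ℝ) - 2 * (m1 : ℝ) * r2 ^ 2 := by
    rw [hl2]; field_simp
  -- linear reformulations
  have key : 2 * ((m1 : ℝ) + m2) * r1 ^ 2 + 2 * ((m1 : ℝ) + m2) * r2 ^ 2
      = 2 * ((m1 : ℝ) + m2) := by linear_combination 2 * ((m1 : ℝ) + m2) * hsum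
  have hA : (l1 ≤ ((m1 : ℝ) - 2 * s1) / r1 ^ 2) ↔
      ((m1 : ℝ) + 2 * s1 ≤ 2 * ((m1 : ℝ) + m2) * r1 ^ 2) := by
    rw [le_div_iff₀ hx]
    constructor <;> intro h <;> nlinarith [e1, hsum, key]
  have hB : (l2 ≤ ((m2 : ℝ) - 2 * s2) / r2 ^ 2) ↔
      ((m2 : ℝ) + 2 * s2 ≤ 2 * ((m1 : ℝ) + m2) * r2 ^ 2) := by
    rw [le_div_iff₀ hy]
    constructor <;> intro h <;> nlinarith [e2, hsum, key]
  constructor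
  · constructor
    · rintro ⟨h1, h2⟩
      refine ⟨(div_le_iff₀ hM).mpr ?_, (le_div_iff₀ hM).mpr ?_⟩
      · have := hA.mp h1; linarith [key]
      · have := hB.mp h2; linarith [key]
    · rintro ⟨h1, h2⟩
      have h1' := (div_le_iff₀ hM).mp h1
      have h2' := (le_div_iff₀ hM).mp h2
      exact ⟨hA.mpr (by linarith [key]), hB.mpr (by linarith [key])⟩
  · constructor
    · rintro ⟨h1, h2⟩
      refine ⟨(div_le_iff₀ hM).mpr ?_, (le_div_iff₀ hM).mpr ?_⟩
      · have := hB.mp h2; linarith [key]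
      · have := hA.mp h1; linarith [key]
    · rintro ⟨h1, h2⟩
      have h1' := (div_le_iff₀ hM).mp h1
      have h2' := (le_div_iff₀ hM).mp h2
      exact ⟨hA.mpr (by linarith [key]), hB.mpr (by linarith [key])⟩
end

section
/- Let $m_1, m_2 \ge 2$ be integers, $m = m_1 + m_2$, and $r_1, r_2 \in (0,1)$ with $r_1^2 + r_2^2 = 1$. Set $\lambda_1 = 2 r_2^2\left(\frac{m_1}{r_1^2} - \frac{m_2}{r_2^2}\right)$ and $\lambda_2 = 2 r_1^2\left(\frac{m_2}{r_2^2} - \frac{m_1}{r_1^2}\right)$, and let $h_1, h_2 \ge 0$ be real numbers satisfying $\frac{m_1^2 h_1^2}{r_1^2} - \frac{m_2^2 h_2^2}{r_2^2} + (r_2^2 - r_1^2)\left(\frac{m_2}{r_2^2} - \frac{m_1}{r_1^2}\right)^2 = 0$. Then $h_1^2 = \frac{1}{r_1^2} - \frac{\lambda_1}{m_1}$ if and only if $h_2^2 = \frac{1}{r_2^2} - \frac{\lambda_2}{m_2}$, and in this case $\frac{m_1^2}{m^2} h_1^2 + \frac{m_2^2}{m^2} h_2^2 + \frac{r_1^2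 r_2^2}{m^2}\left(\frac{m_2}{r_2^2} - \frac{m_1}{r_1^2}\right)^2 = 1$. -/
/-- The first factor attains its maximal mean curvature iff the second does, and in
this case the squared mean curvature of the product is `1`. -/
theorem max_mean_curvature_iff (m1 m2 : ℕ) (hm1 : 2 ≤ m1) (hm2 : 2 ≤ m2)
    (r1 r2 : ℝ) (hr1 : r1 ∈ Set.Ioo (0 : ℝ) 1) (hr2 : r2 ∈ Set.Ioo (0 : ℝ) 1)
    (hsum : r1 ^ 2 + r2 ^ 2 = 1)
    (l1 l2 : ℝ)
    (hl1 : l1 = 2 * r2 ^ 2 * ((m1 : ℝ) / r1 ^ 2 - (m2 : ℝ) / r2 ^ 2))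
    (hl2 : l2 = 2 * r1 ^ 2 * ((m2 : ℝ) / r2 ^ 2 - (m1 : ℝ) / r1 ^ 2))
    (h1 h2 : ℝ) (hh1 : 0 ≤ h1) (hh2 : 0 ≤ h2)
    (hbih : (m1 : ℝ) ^ 2 * h1 ^ 2 / r1 ^ 2 - (m2 : ℝ) ^ 2 * h2 ^ 2 / r2 ^ 2 +
        (r2 ^ 2 - r1 ^ 2) * ((m2 : ℝ) / r2 ^ 2 - (m1 : ℝ) / r1 ^ 2) ^ 2 = 0) :
    (h1 ^ 2 = 1 / r1 ^ 2 - l1 / (m1 : ℝ) ↔ h2 ^ 2 = 1 / r2 ^ 2 - l2 / (m2 : ℝ)) ∧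
    (h1 ^ 2 = 1 / r1 ^ 2 - l1 / (m1 : ℝ) →
      (m1 : ℝ) ^ 2 / ((m1 : ℝ) + m2) ^ 2 * h1 ^ 2 +
        (m2 : ℝ) ^ 2 / ((m1 : ℝ) + m2) ^ 2 * h2 ^ 2 +
        r1 ^ 2 * r2 ^ 2 / ((m1 : ℝ) + m2) ^ 2 *
          ((m2 : ℝ) / r2 ^ 2 - (m1 : ℝ) / r1 ^ 2) ^ 2 = 1) := by
  obtain ⟨hr1p, _⟩ := hr1
  obtain ⟨hr2p, _⟩ := hr2
  have hr1n : r1 ≠ 0 := ne_of_gt hr1p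
  have hr2n : r2 ≠ 0 := ne_of_gt hr2p
  have hm1p : (0:ℝ) < m1 := by exact_mod_cast Nat.lt_of_lt_of_le (by norm_num) hm1
  have hm2p : (0:ℝ) < m2 := by exact_mod_cast Nat.lt_of_lt_of_le (by norm_num) hm2
  have hm1n : (m1:ℝ) ≠ 0 := ne_of_gt hm1p
  have hm2n : (m2:ℝ) ≠ 0 := ne_of_gt hm2p
  have hmn : (m1:ℝ) + m2 ≠ 0 := by positivity
  subst hl1 hl2
  field_simp at hbih
  have hmp : h1 ^ 2 = 1 / r1 ^ 2 - 2 * r2 ^ 2 * ((m1 : ℝ) / r1 ^ 2 - (m2 : ℝ) / r2 ^ 2) / (m1 : ℝ) →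
      h2 ^ 2 = 1 / r2 ^ 2 - 2 * r1 ^ 2 * ((m2 : ℝ) / r2 ^ 2 - (m1 : ℝ) / r1 ^ 2) / (m2 : ℝ) := by
    intro h
    field_simp at h ⊢
    apply mul_left_cancel₀ (show (r1 ^ 2) ^ 2 * (m2 : ℝ) ≠ 0 by positivity)
    linear_combination (-1 : ℝ) * hbih + ((m1 : ℝ) * (r2 ^ 2) ^ 2) * h +
      ((r1 ^ 2) ^ 3 * r2 ^ 2 * (m2 : ℝ) ^ 2 - r1 ^ 2 * (r2 ^ 2) ^ 3 * (m1 : ℝ) ^ 2 +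
        ((m1 : ℝ) ^ 2 * r2 ^ 4 * (r1 ^ 2 * r2 ^ 2 - 1) + (m2 : ℝ) ^ 2 * r1 ^ 4 * (1 - r1 ^ 2 * r2 ^ 2))) * hsum
  have hmpr : h2 ^ 2 = 1 / r2 ^ 2 - 2 * r1 ^ 2 * ((m2 : ℝ) / r2 ^ 2 - (m1 : ℝ) / r1 ^ 2) / (m2 : ℝ) →
      h1 ^ 2 = 1 / r1 ^ 2 - 2 * r2 ^ 2 * ((m1 : ℝ) / r1 ^ 2 - (m2 : ℝ) / r2 ^ 2) / (m1 : ℝ) := by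
    intro h
    field_simp at h ⊢
    apply mul_left_cancel₀ (show (r2 ^ 2) ^ 2 * (m1 : ℝ) ≠ 0 by positivity)
    linear_combination (1 : ℝ) * hbih + ((m2 : ℝ) * (r1 ^ 2) ^ 2) * h +
      (r1 ^ 2 * (r2 ^ 2) ^ 3 * (m1 : ℝ) ^ 2 - (r1 ^ 2) ^ 3 * r2 ^ 2 * (m2 : ℝ) ^ 2 +
        ((m2 : ℝ) ^ 2 * r1 ^ 4 * (r1 ^ 2 * r2 ^ 2 - 1) + (m1 : ℝ) ^ 2 * r2 ^ 4 * (1 - r1 ^ 2 * r2 ^ 2))) * hsum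
  refine ⟨⟨hmp, hmpr⟩, fun h => ?_⟩
  have hy := hmp h
  field_simp at h hy ⊢
  linear_combination ((m1 : ℝ) * r2 ^ 2) * h +
    ((m2 : ℝ) * r1 ^ 2) * hy +
    (-(r1 ^ 2 * (r2 ^ 2) ^ 2 * (m1 : ℝ) ^ 2 * ((m1 : ℝ) + m2) ^ 2) -
      (r1 ^ 2) ^ 2 * r2 ^ 2 * (m2 : ℝ) ^ 2 * ((m1 : ℝ) + m2) ^ 2 +
      ((1)*r1^2*r2^4*(m1:ℝ)^2*(m2:ℝ)^2 + (2)*r1^2*r2^4*(m1:ℝ)^3*(m2:ℝ) + (1)*r1^2*r2^4*(m1:ℝ)^4 + (2)*r1^4*r2^2*(m1:ℝ)*(m2:ℝ)^3 + (1)*r1^4*r2^2*(m1:ℝ)^2*(m2:ℝ)^2 + (1)*r1^4*r2^2*(m2:ℝ)^4 + (-1)*r2^2*(m1:ℝ)^2 + (-1)*r1^2*(m2:ℝ)^2)) * hsum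
end

section
/- Let $m \ge 2$ be an integer, $d$ a real number, and $z_1 < z_2$ positive real numbers, both satisfying $(2m^2 - d)z^2 - 2mz + 1 = 0$. Suppose $N_1, N_2$ are positive integers with $N_1 + N_2 = m$ and $N_1 z_1 + N_2 z_2 = 1$. Then $N_1 > N_2$, $d = (N_1 - N_2)^2 + m^2$, $z_1 = \frac{1}{2N_1}$ and $z_2 = \frac{1}{2N_2}$. -/
/-- Key algebraic lemma in the classification of biharmonic products: if `z₁ < z₂`
are positive roots of `(2m² - d)z² - 2mz + 1 = 0` and `N₁z₁ + N₂z₂ = 1` with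
`N₁ + N₂ = m`, then `N₁ > N₂`, `d = (N₁-N₂)² + m²`, `z₁ = 1/(2N₁)`, `z₂ = 1/(2N₂)`. -/
theorem roots_multiplicities (m : ℕ) (hm : 2 ≤ m) (d z1 z2 : ℝ)
    (hz1pos : 0 < z1) (hz2pos : 0 < z2) (hlt : z1 < z2)
    (heq1 : (2 * (m : ℝ) ^ 2 - d) * z1 ^ 2 - 2 * (m : ℝ) * z1 + 1 = 0)
    (heq2 : (2 * (m : ℝ) ^ 2 - d) * z2 ^ 2 - 2 * (m : ℝ) * z2 + 1 = 0)
    (N1 N2 : ℕ) (hN1 : 0 < N1) (hN2 : 0 < N2) (hNsum : N1 + N2 = m)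
    (hsum : (N1 : ℝ) * z1 + (N2 : ℝ) * z2 = 1) :
    N2 < N1 ∧ d = ((N1 : ℝ) - (N2 : ℝ)) ^ 2 + (m : ℝ) ^ 2 ∧
      z1 = 1 / (2 * (N1 : ℝ)) ∧ z2 = 1 / (2 * (N2 : ℝ)) := by
  set a : ℝ := 2 * (m : ℝ) ^ 2 - d with ha_def
  have hC : (N1 : ℝ) + (N2 : ℝ) = (m : ℝ) := by exact_mod_cast congrArg (Nat.cast : ℕ → ℝ) hNsum
  have hN1R : (0 : ℝ) < N1 := by exact_mod_cast hN1
  have hN2R : (0 : ℝ) < N2 := by exact_mod_cast hN2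
  have hne : z1 - z2 ≠ 0 := sub_ne_zero.mpr (ne_of_lt hlt)
  -- Vieta: a(z1+z2) = 2m
  have key0 : (z1 - z2) * (a * (z1 + z2) - 2 * (m : ℝ)) = 0 := by linear_combination heq1 - heq2
  have key1 : a * (z1 + z2) = 2 * (m : ℝ) := by
    rcases mul_eq_zero.mp key0 with h | h
    · exact absurd h hne
    · linarith
  -- Vieta: a z1 z2 = 1
  have key2 : a * (z1 * z2) = 1 := by linear_combination z1 * key1 - heq1
  have ha : a ≠ 0 := by
    intro h; rw [h, zero_mul] at key2; exact one_ne_zero key2.symm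
  have h3 : z1 + z2 = 2 * (m : ℝ) * (z1 * z2) := by
    have h : a * (z1 + z2) = a * (2 * (m : ℝ) * (z1 * z2)) := by
      linear_combination key1 - 2 * (m : ℝ) * key2
    exact mul_left_cancel₀ ha h
  -- factoring the equation for z2
  have hq : (2 * (N2 : ℝ) * z2 - 1) * ((m : ℝ) * z2 - 1) = 0 := by
    linear_combination (N1 : ℝ) * h3 - (1 - 2 * (m : ℝ) * z2) * hsum - z2 * hC
  rcases mul_eq_zero.mp hq with hz2' | hz2'
  · -- main case : z2 = 1/(2 N2)
    have hz2v : z2 = 1 / (2 * (N2 : ℝ)) := by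
      field_simp
      linarith
    have hz1v : z1 = 1 / (2 * (N1 : ℝ)) := by
      have hN1z1 : (N1 : ℝ) * z1 = 1 / 2 := by linear_combination hsum - (1/2) * hz2'
      field_simp
      linarith
    have hlt' : (N2 : ℝ) < (N1 : ℝ) := by
      rw [hz1v, hz2v] at hlt
      have h4 : (0:ℝ) < 2 * (N1:ℝ) := by linarith
      have h5 : (0:ℝ) < 2 * (N2:ℝ) := by linarith
      rw [div_lt_div_iff₀ h4 h5] at hlt
      linarith
    refine ⟨by exact_mod_cast hlt', ?_, hz1v, hz2v⟩
    have hkey2' : a * (1 / (2 * (N1 : ℝ)) * (1 / (2 * (N2 : ℝ)))) = 1 := by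
      rw [← hz1v, ← hz2v]; exact key2
    have hN1ne : (N1 : ℝ) ≠ 0 := ne_of_gt hN1R
    have hN2ne : (N2 : ℝ) ≠ 0 := ne_of_gt hN2R
    have haval : a = 4 * (N1 : ℝ) * (N2 : ℝ) := by
      field_simp at hkey2'
      linarith
    have : d = 2 * (m : ℝ) ^ 2 - a := by rw [ha_def]; ring
    rw [this, haval, ← hC]; ring
  · -- degenerate case: m z2 = 1 forces z1 = z2
    exfalso
    have hmz2 : (m : ℝ) * z2 = 1 := by linarith
    have hN1mz1 : (N1 : ℝ) * ((m : ℝ) * z1 - 1) = 0 := by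
      linear_combination (m : ℝ) * hsum - (N2 : ℝ) * hmz2 - hC
    have hmz1 : (m : ℝ) * z1 = 1 := by
      rcases mul_eq_zero.mp hN1mz1 with h | h
      · exact absurd h (ne_of_gt hN1R)
      · linarith
    have hmR : (0 : ℝ) < (m : ℝ) := by
      have : (0:ℝ) < (N1:ℝ) + (N2:ℝ) := by linarith
      linarith [hC]
    have : z1 = z2 := mul_left_cancel₀ (ne_of_gt hmR) (hmz1.trans hmz2.symm)
    linarith
end

section
/- Let $m_1, m_2 > 2$ be integers and $m = m_1 + m_2$. Let $a_1, b_1, a_2, b_2 > 0$ satisfy $a_1^2 + b_1^2 + a_2^2 + b_2^2 = 1$, and set $\alpha_1 = \frac{a_1^2}{m_1 - 1}$, $\alpha_2 = b_1^2$, $\alpha_3 = \frac{a_2^2}{m_2 - 1}$, $\alpha_4 = b_2^2$ and $d = \frac{(m_1-1)^2}{a_1^2} + \frac{1}{b_1^2} + \frac{(m_2-1)^2}{a_2^2} + \frac{1}{b_2^2}$. Then the system $\alpha_k(d - 2m^2) + 2m - \frac{1}{\alpha_k} = 0$ for all $k \in \{1,2,3,4\}$ holds if and only if one of the following eight cases holds: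 (1) $\alpha_1 = \alpha_2 = \alpha_3 = \alpha_4 = \frac{1}{m}$; (2) $\alpha_1 = \alpha_2 = \frac{1}{2m_1}$ and $\alpha_3 = \alpha_4 = \frac{1}{2m_2}$; (3) $\alpha_1 = \alpha_3 = \frac{1}{2(m-2)}$ and $\alpha_2 = \alpha_4 = \frac{1}{4}$; (4) $\alpha_1 = \alpha_4 = \frac{1}{2m_1}$ and $\alpha_2 = \alpha_3 = \frac{1}{2m_2}$; (5) $\alpha_1 = \alpha_2 = \alpha_3 = \frac{1}{2(m-1)}$ and $\alpha_4 = \frac{1}{2}$; (6) $\alpha_1 = \alpha_2 = \alpha_4 = \frac{1}{2(m_1+1)}$ and $\alpha_3 = \frac{1}{2(m_2-1)}$; (7) $\alpha_1 = \alpha_3 = \alpha_4 = \frac{1}{2(m-1)}$ and $\alpha_2 = \frac{1}{2}$; (8) $\alpha_2 = \alpha_3 = \alpha_4 = \frac{1}{2(m_2+1)}$ and $\alpha_1 = \frac{1}{2(m_1-1)}$. -/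
lemma pair_rel {C M x y : ℝ} (hx : C*x^2 + 2*M*x - 1 = 0)
    (hy : C*y^2 + 2*M*y - 1 = 0) (hxy : x ≠ y) : C*x*y = -1 := by
  have h : (y - x) * (C*x*y + 1) = 0 := by linear_combination x*hy - y*hx
  rcases mul_eq_zero.mp h with h' | h'
  · exact absurd (sub_eq_zero.mp h').symm hxy
  · linarith

lemma third_eq {C x y z : ℝ} (hxy : C*x*y = -1) (hxz : C*x*z = -1) : y = z := by
  have hCx : C*x ≠ 0 := by
    intro h
    rw [h, zero_mul] at hxy
    norm_num at hxy
  have h : C*x*y = C*x*z := by rw [hxy, hxz]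
  exact mul_left_cancel₀ hCx h

lemma two_group {M w s t : ℝ} (hw : 0 < w) (hwm : w < M)
    (ht : 0 < t) (hst : s ≠ t)
    (h1 : w*s + (M-w)*t = 1) (h2 : s + t = 2*M*s*t) :
    s = 1/(2*w) ∧ t = 1/(2*(M-w)) := by
  have key : (M*s - 1)*(2*w*s - 1) = 0 := by
    linear_combination (2*M*s - 1) * h1 + (M - w) * h2
  have hMw : (0:ℝ) < M - w := by linarith
  rcases mul_eq_zero.mp key with h | h
  · exfalso
    exact hst (by linear_combination h2 + 2*t*h)
  · have hs' : s = 1/(2*w) := by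
      rw [eq_div_iff (by positivity : (2*w:ℝ) ≠ 0)]
      linarith
    refine ⟨hs', ?_⟩
    rw [eq_div_iff (by positivity : (2*(M-w):ℝ) ≠ 0)]
    linear_combination 2*h1 - h

lemma branch {M w s t C : ℝ} (hw : 0 < w) (hwm : w < M)
    (ht : 0 < t) (hst : s ≠ t)
    (Qs : C*s^2 + 2*M*s - 1 = 0) (Qt : C*t^2 + 2*M*t - 1 = 0)
    (h1 : w*s + (M-w)*t = 1) :
    s = 1/(2*w) ∧ t = 1/(2*(M-w)) := by
  have p := pair_rel Qs Qt hst
  have h2 : s + t = 2*M*s*t := by linear_combination (-t)*Qs + s*p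
  exact two_group hw hwm ht hst h1 h2

set_option maxHeartbeats 1600000 in
/-- The biharmonicity system for the product
`L₁^{m₁-1} × 𝕊¹(b₁) × L₂^{m₂-1} × 𝕊¹(b₂)` in `𝕊ⁿ` holds iff one of eight cases
for `(α₁, α₂, α₃, α₄)` occurs. -/
theorem biharmonic_product_system (m1 m2 : ℕ) (hm1 : 2 < m1) (hm2 : 2 < m2)
    (a1 b1 a2 b2 : ℝ) (ha1 : 0 < a1) (hb1 : 0 < b1) (ha2 : 0 < a2) (hb2 : 0 < b2)
    (hsum : a1 ^ 2 + b1 ^ 2 + a2 ^ 2 + b2 ^ 2 = 1)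
    (α1 α2 α3 α4 d : ℝ)
    (hα1 : α1 = a1 ^ 2 / ((m1 : ℝ) - 1)) (hα2 : α2 = b1 ^ 2)
    (hα3 : α3 = a2 ^ 2 / ((m2 : ℝ) - 1)) (hα4 : α4 = b2 ^ 2)
    (hd : d = ((m1 : ℝ) - 1) ^ 2 / a1 ^ 2 + 1 / b1 ^ 2 +
        ((m2 : ℝ) - 1) ^ 2 / a2 ^ 2 + 1 / b2 ^ 2) :
    (α1 * (d - 2 * ((m1 : ℝ) + m2) ^ 2) + 2 * ((m1 : ℝ) + m2) - 1 / α1 = 0 ∧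
     α2 * (d - 2 * ((m1 : ℝ) + m2) ^ 2) + 2 * ((m1 : ℝ) + m2) - 1 / α2 = 0 ∧
     α3 * (d - 2 * ((m1 : ℝ) + m2) ^ 2) + 2 * ((m1 : ℝ) + m2) - 1 / α3 = 0 ∧
     α4 * (d - 2 * ((m1 : ℝ) + m2) ^ 2) + 2 * ((m1 : ℝ) + m2) - 1 / α4 = 0) ↔
    ((α1 = 1 / ((m1 : ℝ) + m2) ∧ α2 = 1 / ((m1 : ℝ) + m2) ∧
        α3 = 1 / ((m1 : ℝ) + m2) ∧ α4 = 1 / ((m1 : ℝ) + m2)) ∨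
     (α1 = 1 / (2 * (m1 : ℝ)) ∧ α2 = 1 / (2 * (m1 : ℝ)) ∧
        α3 = 1 / (2 * (m2 : ℝ)) ∧ α4 = 1 / (2 * (m2 : ℝ))) ∨
     (α1 = 1 / (2 * ((m1 : ℝ) + m2 - 2)) ∧ α3 = 1 / (2 * ((m1 : ℝ) + m2 - 2)) ∧
        α2 = 1 / 4 ∧ α4 = 1 / 4) ∨
     (α1 = 1 / (2 * (m1 : ℝ)) ∧ α4 = 1 / (2 * (m1 : ℝ)) ∧
        α2 = 1 / (2 * (m2 : ℝ)) ∧ α3 = 1 / (2 * (m2 : ℝ))) ∨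
     (α1 = 1 / (2 * ((m1 : ℝ) + m2 - 1)) ∧ α2 = 1 / (2 * ((m1 : ℝ) + m2 - 1)) ∧
        α3 = 1 / (2 * ((m1 : ℝ) + m2 - 1)) ∧ α4 = 1 / 2) ∨
     (α1 = 1 / (2 * ((m1 : ℝ) + 1)) ∧ α2 = 1 / (2 * ((m1 : ℝ) + 1)) ∧
        α4 = 1 / (2 * ((m1 : ℝ) + 1)) ∧ α3 = 1 / (2 * ((m2 : ℝ) - 1))) ∨
     (α1 = 1 / (2 * ((m1 : ℝ) + m2 - 1)) ∧ α3 = 1 / (2 * ((m1 : ℝ) + m2 - 1)) ∧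
        α4 = 1 / (2 * ((m1 : ℝ) + m2 - 1)) ∧ α2 = 1 / 2) ∨
     (α2 = 1 / (2 * ((m2 : ℝ) + 1)) ∧ α3 = 1 / (2 * ((m2 : ℝ) + 1)) ∧
        α4 = 1 / (2 * ((m2 : ℝ) + 1)) ∧ α1 = 1 / (2 * ((m1 : ℝ) - 1)))) := by
  have hm1R : (2:ℝ) < (m1:ℝ) := by exact_mod_cast hm1
  have hm2R : (2:ℝ) < (m2:ℝ) := by exact_mod_cast hm2
  have hm1p : (0:ℝ) < (m1:ℝ) - 1 := by linarith
  have hm2p : (0:ℝ) < (m2:ℝ) - 1 := by linarith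
  have hm1ne : ((m1:ℝ) - 1) ≠ 0 := ne_of_gt hm1p
  have hm2ne : ((m2:ℝ) - 1) ≠ 0 := ne_of_gt hm2p
  have ha1ne : a1 ≠ 0 := ne_of_gt ha1
  have hb1ne : b1 ≠ 0 := ne_of_gt hb1
  have ha2ne : a2 ≠ 0 := ne_of_gt ha2
  have hb2ne : b2 ≠ 0 := ne_of_gt hb2
  have hα1p : 0 < α1 := by rw [hα1]; positivity
  have hα2p : 0 < α2 := by rw [hα2]; positivity
  have hα3p : 0 < α3 := by rw [hα3]; positivity
  have hα4p : 0 < α4 := by rw [hα4]; positivity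
  have hα1ne : α1 ≠ 0 := ne_of_gt hα1p
  have hα2ne : α2 ≠ 0 := ne_of_gt hα2p
  have hα3ne : α3 ≠ 0 := ne_of_gt hα3p
  have hα4ne : α4 ≠ 0 := ne_of_gt hα4p
  have hA1 : a1^2 = ((m1:ℝ)-1) * α1 := by rw [hα1]; field_simp
  have hA3 : a2^2 = ((m2:ℝ)-1) * α3 := by rw [hα3]; field_simp
  have hS : ((m1:ℝ)-1)*α1 + α2 + ((m2:ℝ)-1)*α3 + α4 = 1 := by
    rw [hA1, hA3, ← hα2, ← hα4] at hsum
    linarith [hsum]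
  have hD : d = ((m1:ℝ)-1)/α1 + 1/α2 + ((m2:ℝ)-1)/α3 + 1/α4 := by
    rw [hd, hA1, hA3, hα2, hα4]
    field_simp
  constructor
  · rintro ⟨E1, E2, E3, E4⟩
    set C : ℝ := d - 2 * ((m1:ℝ) + m2)^2 with hC
    have Q1 : C*α1^2 + 2*((m1:ℝ)+m2)*α1 - 1 = 0 := by
      have h : α1 * (1/α1) = 1 := by field_simp
      linear_combination α1*E1 + h
    have Q2 : C*α2^2 + 2*((m1:ℝ)+m2)*α2 - 1 = 0 := by
      have h : α2 * (1/α2) = 1 := by field_simp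
      linear_combination α2*E2 + h
    have Q3 : C*α3^2 + 2*((m1:ℝ)+m2)*α3 - 1 = 0 := by
      have h : α3 * (1/α3) = 1 := by field_simp
      linear_combination α3*E3 + h
    have Q4 : C*α4^2 + 2*((m1:ℝ)+m2)*α4 - 1 = 0 := by
      have h : α4 * (1/α4) = 1 := by field_simp
      linear_combination α4*E4 + h
    by_cases h12 : α1 = α2 <;> by_cases h13 : α1 = α3 <;> by_cases h14 : α1 = α4
    · -- all equal : case 1
      left
      have hMne : ((m1:ℝ)+m2) ≠ 0 := by positivity
      have hMα : ((m1:ℝ)+m2)*α1 = 1 := by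
        linear_combination hS + h12 + ((m2:ℝ)-1)*h13 + h14
      have e1 : α1 = 1/((m1:ℝ)+m2) := by
        rw [eq_div_iff hMne]; linarith
      exact ⟨e1, h12 ▸ e1, h13 ▸ e1, h14 ▸ e1⟩
    · -- α1=α2=α3, α4 distinct : case 5, w = M-1
      have h1 : ((m1:ℝ)+m2-1)*α1 + (((m1:ℝ)+m2) - ((m1:ℝ)+m2-1))*α4 = 1 := by
        linear_combination hS + h12 + ((m2:ℝ)-1)*h13
      obtain ⟨hs', ht'⟩ := branch (by linarith) (by linarith) hα4p h14 Q1 Q4 h1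
      have e : ((m1:ℝ)+m2) - ((m1:ℝ)+m2-1) = 1 := by ring
      rw [e] at ht'
      norm_num at ht'
      exact Or.inr <| Or.inr <| Or.inr <| Or.inr <| Or.inl
        ⟨hs', h12 ▸ hs', h13 ▸ hs', ht'⟩
    · -- α1=α2=α4, α3 distinct : case 6, w = m1+1
      have h1 : ((m1:ℝ)+1)*α1 + (((m1:ℝ)+m2) - ((m1:ℝ)+1))*α3 = 1 := by
        linear_combination hS + h12 + h14
      obtain ⟨hs', ht'⟩ := branch (by linarith) (by linarith) hα3p h13 Q1 Q3 h1
      have e : ((m1:ℝ)+m2) - ((m1:ℝ)+1) = (m2:ℝ) - 1 := by ring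
      rw [e] at ht'
      exact Or.inr <| Or.inr <| Or.inr <| Or.inr <| Or.inr <| Or.inl
        ⟨hs', h12 ▸ hs', h14 ▸ hs', ht'⟩
    · -- α1=α2, α3≠α1, α4≠α1 ⇒ α3=α4 : case 2, w = m1
      have h34 : α3 = α4 := third_eq (pair_rel Q1 Q3 h13) (pair_rel Q1 Q4 h14)
      have h1 : ((m1:ℝ))*α1 + (((m1:ℝ)+m2) - (m1:ℝ))*α3 = 1 := by
        linear_combination hS + h12 + h34
      obtain ⟨hs', ht'⟩ := branch (by linarith) (by linarith) hα3p h13 Q1 Q3 h1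
      have e : ((m1:ℝ)+m2) - (m1:ℝ) = (m2:ℝ) := by ring
      rw [e] at ht'
      exact Or.inr <| Or.inl ⟨hs', h12 ▸ hs', ht', h34 ▸ ht'⟩
    · -- α2≠α1, α1=α3=α4 : case 7, w = M-1
      have h1 : ((m1:ℝ)+m2-1)*α1 + (((m1:ℝ)+m2) - ((m1:ℝ)+m2-1))*α2 = 1 := by
        linear_combination hS + ((m2:ℝ)-1)*h13 + h14
      obtain ⟨hs', ht'⟩ := branch (by linarith) (by linarith) hα2p h12 Q1 Q2 h1
      have e : ((m1:ℝ)+m2) - ((m1:ℝ)+m2-1) = 1 := by ring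
      rw [e] at ht'
      norm_num at ht'
      exact Or.inr <| Or.inr <| Or.inr <| Or.inr <| Or.inr <| Or.inr <| Or.inl
        ⟨hs', h13 ▸ hs', h14 ▸ hs', ht'⟩
    · -- α1=α3, α2≠α1, α4≠α1 ⇒ α2=α4 : case 3, w = M-2
      have h24 : α2 = α4 := third_eq (pair_rel Q1 Q2 h12) (pair_rel Q1 Q4 h14)
      have h1 : ((m1:ℝ)+m2-2)*α1 + (((m1:ℝ)+m2) - ((m1:ℝ)+m2-2))*α2 = 1 := by
        linear_combination hS + ((m2:ℝ)-1)*h13 + h24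
      obtain ⟨hs', ht'⟩ := branch (by linarith) (by linarith) hα2p h12 Q1 Q2 h1
      have e : ((m1:ℝ)+m2) - ((m1:ℝ)+m2-2) = 2 := by ring
      rw [e] at ht'
      norm_num at ht'
      exact Or.inr <| Or.inr <| Or.inl ⟨hs', h13 ▸ hs', ht', h24 ▸ ht'⟩
    · -- α1=α4, α2≠α1, α3≠α1 ⇒ α2=α3 : case 4, w = m1
      have h23 : α2 = α3 := third_eq (pair_rel Q1 Q2 h12) (pair_rel Q1 Q3 h13)
      have h1 : ((m1:ℝ))*α1 + (((m1:ℝ)+m2) - (m1:ℝ))*α2 = 1 := by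
        linear_combination hS + h14 + ((m2:ℝ)-1)*h23
      obtain ⟨hs', ht'⟩ := branch (by linarith) (by linarith) hα2p h12 Q1 Q2 h1
      have e : ((m1:ℝ)+m2) - (m1:ℝ) = (m2:ℝ) := by ring
      rw [e] at ht'
      exact Or.inr <| Or.inr <| Or.inr <| Or.inl ⟨hs', h14 ▸ hs', ht', h23 ▸ ht'⟩
    · -- all of α2,α3,α4 ≠ α1 ⇒ α2=α3=α4 : case 8, w = m1-1
      have h23 : α2 = α3 := third_eq (pair_rel Q1 Q2 h12) (pair_rel Q1 Q3 h13)
      have h24 : α2 = α4 := third_eq (pair_rel Q1 Q2 h12) (pair_rel Q1 Q4 h14)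
      have h1 : ((m1:ℝ)-1)*α1 + (((m1:ℝ)+m2) - ((m1:ℝ)-1))*α2 = 1 := by
        linear_combination hS + ((m2:ℝ)-1)*h23 + h24
      obtain ⟨hs', ht'⟩ := branch (by linarith) (by linarith) hα2p h12 Q1 Q2 h1
      have e : ((m1:ℝ)+m2) - ((m1:ℝ)-1) = (m2:ℝ) + 1 := by ring
      rw [e] at ht'
      exact Or.inr <| Or.inr <| Or.inr <| Or.inr <| Or.inr <| Or.inr <| Or.inr
        ⟨ht', h23 ▸ ht', h24 ▸ ht', hs'⟩
  · have hMne : ((m1:ℝ)+m2) ≠ 0 := by positivity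
    have hm1ne' : (m1:ℝ) ≠ 0 := by positivity
    have hm2ne' : (m2:ℝ) ≠ 0 := by positivity
    have hw2ne : ((m1:ℝ)+m2-2) ≠ 0 := by intro h; nlinarith
    have hw1ne : ((m1:ℝ)+m2-1) ≠ 0 := by intro h; nlinarith
    have hp1ne : ((m1:ℝ)+1) ≠ 0 := by positivity
    have hp2ne : ((m2:ℝ)+1) ≠ 0 := by positivity
    rintro (⟨e1,e2,e3,e4⟩|⟨e1,e2,e3,e4⟩|⟨e1,e2,e3,e4⟩|⟨e1,e2,e3,e4⟩|⟨e1,e2,e3,e4⟩|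
      ⟨e1,e2,e3,e4⟩|⟨e1,e2,e3,e4⟩|⟨e1,e2,e3,e4⟩) <;>
      [skip; skip; skip; skip; skip; skip; skip; skip] <;>
      · rw [hD, e1, e2, e3, e4]
        refine ⟨?_, ?_, ?_, ?_⟩ <;> (field_simp; ring)
end

section
/- Let $m_1, m_2 \ge 3$ be integers and $m = m_1 + m_2$. Then $\frac{m_1 + 2\sqrt{m_1 - 1}}{2m} \le \frac{3m_1 + m_2 - 4}{4(m-2)} \le \frac{2m_1 + m_2 - 2\sqrt{m_2 - 1}}{2m}$. -/
/-- The squared radius `(3m₁ + m₂ - 4)/(4(m-2))` lies in the admissible range. -/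
theorem r1_sq_case2_in_range (m1 m2 : ℕ) (hm1 : 3 ≤ m1) (hm2 : 3 ≤ m2) :
    ((m1 : ℝ) + 2 * Real.sqrt ((m1 : ℝ) - 1)) / (2 * ((m1 : ℝ) + m2)) ≤
      (3 * (m1 : ℝ) + m2 - 4) / (4 * ((m1 : ℝ) + m2 - 2)) ∧
    (3 * (m1 : ℝ) + m2 - 4) / (4 * ((m1 : ℝ) + m2 - 2)) ≤
      (2 * (m1 : ℝ) + m2 - 2 * Real.sqrt ((m2 : ℝ) - 1)) / (2 * ((m1 : ℝ) + m2)) := by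
  have ha : (3 : ℝ) ≤ (m1 : ℝ) := by exact_mod_cast hm1
  have hb : (3 : ℝ) ≤ (m2 : ℝ) := by exact_mod_cast hm2
  set a : ℝ := (m1 : ℝ)
  set b : ℝ := (m2 : ℝ)
  set s : ℝ := Real.sqrt (a - 1) with hs_def
  set u : ℝ := Real.sqrt (b - 1) with hu_def
  have hs0 : 0 ≤ s := Real.sqrt_nonneg _
  have hu0 : 0 ≤ u := Real.sqrt_nonneg _
  have hs2 : s ^ 2 = a - 1 := Real.sq_sqrt (by linarith)
  have hu2 : u ^ 2 = b - 1 := Real.sq_sqrt (by linarith)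
  have hd1 : (0 : ℝ) < 2 * (a + b) := by linarith
  have hd2 : (0 : ℝ) < 4 * (a + b - 2) := by linarith
  constructor
  · rw [div_le_div_iff₀ hd1 hd2]
    nlinarith [sq_nonneg (b + s ^ 2 - 2 * s - 1), hs2, hs0]
  · rw [div_le_div_iff₀ hd2 hd1]
    nlinarith [sq_nonneg (a + u ^ 2 - 2 * u - 1), sq_nonneg (u - 2), hu2, hu0,
      mul_nonneg (sub_nonneg.2 ha) (sq_nonneg (u - 2)),
      mul_nonneg hu0 (sq_nonneg (u - 2))]
end

section
/- Let $m_1, m_2 \ge 3$ be integers and $m = m_1 + m_2$. Then $\frac{m_1 + 2\sqrt{m_1 - 1}}{2m} \le \frac{m_1 m_2 - m_2 + m_1}{2 m_1 m_2} \le \frac{2m_1 + m_2 - 2\sqrt{m_2 - 1}}{2m}$. -/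
/-- The squared radius `(m₁m₂ - m₂ + m₁)/(2m₁m₂)` lies in the admissible range. -/
theorem r1_sq_case3_in_range (m1 m2 : ℕ) (hm1 : 3 ≤ m1) (hm2 : 3 ≤ m2) :
    ((m1 : ℝ) + 2 * Real.sqrt ((m1 : ℝ) - 1)) / (2 * ((m1 : ℝ) + m2)) ≤
      ((m1 : ℝ) * m2 - m2 + m1) / (2 * (m1 : ℝ) * m2) ∧
    ((m1 : ℝ) * m2 - m2 + m1) / (2 * (m1 : ℝ) * m2) ≤
      (2 * (m1 : ℝ) + m2 - 2 * Real.sqrt ((m2 : ℝ) - 1)) / (2 * ((m1 : ℝ) + m2)) := by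
  have hA : (3 : ℝ) ≤ (m1 : ℝ) := by exact_mod_cast hm1
  have hB : (3 : ℝ) ≤ (m2 : ℝ) := by exact_mod_cast hm2
  set A := (m1 : ℝ)
  set B := (m2 : ℝ)
  have hA0 : (0 : ℝ) < A := by linarith
  have hB0 : (0 : ℝ) < B := by linarith
  have hAB : (0 : ℝ) < 2 * (A + B) := by linarith
  have hABm : (0 : ℝ) < 2 * A * B := by positivity
  have hs1 : Real.sqrt (A - 1) ^ 2 = A - 1 := Real.sq_sqrt (by linarith)
  have hs2 : Real.sqrt (B - 1) ^ 2 = B - 1 := Real.sq_sqrt (by linarith)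
  have hn1 : (0 : ℝ) ≤ Real.sqrt (A - 1) := Real.sqrt_nonneg _
  have hn2 : (0 : ℝ) ≤ Real.sqrt (B - 1) := Real.sqrt_nonneg _
  have e1 : (Real.sqrt (A - 1) * B - A) ^ 2
      = (A - 1) * B ^ 2 - 2 * A * B * Real.sqrt (A - 1) + A ^ 2 := by
    rw [sub_sq, mul_pow, hs1]; ring
  have e2 : (A * Real.sqrt (B - 1) - B) ^ 2
      = A ^ 2 * (B - 1) - 2 * A * B * Real.sqrt (B - 1) + B ^ 2 := by
    rw [sub_sq, mul_pow, hs2]; ring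
  have k1 := sq_nonneg (Real.sqrt (A - 1) * B - A)
  have k2 := sq_nonneg (A * Real.sqrt (B - 1) - B)
  rw [e1] at k1
  rw [e2] at k2
  constructor
  · rw [div_le_div_iff₀ hAB hABm]
    nlinarith [k1]
  · rw [div_le_div_iff₀ hABm hAB]
    nlinarith [k2]
end

section
/- Let $m_1, m_2 > 2$ be integers and $m = m_1 + m_2$. Define on the interval $I = \left[\frac{m_1 + 2\sqrt{m_1-1}}{2m}, \frac{2m_1 + m_2 - 2\sqrt{m_2-1}}{2m}\right]$ the functions $g(x) = \frac{(m_1-2)^2 - 2m_1^2}{2m^2 x^2} + \frac{m_1}{m x} + \frac{(m_1-2)\sqrt{(2mx - m_1)^2 - 4(m_1-1)}}{2m^2 x^2} + \frac{1}{m^2}\left(m - \frac{m_1}{x}\right)^2$ and $h(y) = \frac{(m_2-2)^2 - 2m_2^2}{2m^2 y^2} + \frac{m_2}{m y} + \frac{(m_2-2)\sqrt{(2my - m_2)^2 - 4(m_2-1)}}{2m^2 y^2} + \frac{1}{m^2}\left(m - \frac{m_2}{y}\right)^2$. Then for all $x, x' \in I$ with $x \le x'$ one has $g(x) \le g(x')$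 and $h(1-x) \ge h(1-x')$. -/
/-- The upper-bound function for the squared mean curvature of the product,
coming from the factor `M₁^{m₁}` (the function `h` is `gBound m2 m1`). -/
noncomputable def gBound (m1 m2 : ℕ) (x : ℝ) : ℝ :=
  (((m1 : ℝ) - 2) ^ 2 - 2 * (m1 : ℝ) ^ 2) / (2 * ((m1 : ℝ) + m2) ^ 2 * x ^ 2) +
    (m1 : ℝ) / (((m1 : ℝ) + m2) * x) +
    ((m1 : ℝ) - 2) *
      Real.sqrt ((2 * ((m1 : ℝ) + m2) * x - (m1 : ℝ)) ^ 2 - 4 * ((m1 : ℝ) - 1)) /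
      (2 * ((m1 : ℝ) + m2) ^ 2 * x ^ 2) +
    (1 / ((m1 : ℝ) + m2) ^ 2) * (((m1 : ℝ) + m2) - (m1 : ℝ) / x) ^ 2

lemma sq_le_imp (a b : ℝ) (hb : 0 ≤ b) (h : a^2 ≤ b^2) : a ≤ b := by
  nlinarith [sq_nonneg (a+b), sq_nonneg (a-b)]

lemma hb1_aux (A t t' s s' : ℝ) (p1 : t'*((A-2)*s) ≤ t'*(2*A*t - (A-2)^2))
    (p2 : t*((A-2)*s') ≤ t*(2*A*t' - (A-2)^2)) :
    0 ≤ 4*A*t*t' - (A-2)^2*(t+t') - (A-2)*(t*s'+t'*s) := by nlinarith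

lemma final_aux (A t t' s s' : ℝ) (hD : 0 ≤ t*s' - t'*s - (A-2)*(t'-t)) :
    (s + A - 2)*(2*t') ≤ (s' + A - 2)*(2*t) := by nlinarith

lemma keyMono (A t t' : ℝ) (hA : 2 ≤ A)
    (ht : (A + 2*Real.sqrt (A-1))/2 ≤ t) (htt : t ≤ t') :
    0 ≤ (Real.sqrt ((2*t - A)^2 - 4*(A-1)) + A - 2)/(2*t) ∧
    (Real.sqrt ((2*t - A)^2 - 4*(A-1)) + A - 2)/(2*t) ≤
      (Real.sqrt ((2*t' - A)^2 - 4*(A-1)) + A - 2)/(2*t') := by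
  have hA1 : (1:ℝ) ≤ A - 1 := by linarith
  have hsq1 : 1 ≤ Real.sqrt (A-1) := by
    have := Real.sqrt_le_sqrt hA1
    rwa [Real.sqrt_one] at this
  have hsA : Real.sqrt (A-1)^2 = A - 1 := Real.sq_sqrt (by linarith)
  have ht0 : 0 < t := by linarith
  have ht0' : 0 < t' := by linarith
  have h2tA : 2*Real.sqrt (A-1) ≤ 2*t - A := by linarith
  have h2tA' : 2*Real.sqrt (A-1) ≤ 2*t' - A := by linarith
  have hw : 0 ≤ (2*t - A)^2 - 4*(A-1) := by nlinarith
  have hw' : 0 ≤ (2*t' - A)^2 - 4*(A-1) := by nlinarith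
  set s := Real.sqrt ((2*t - A)^2 - 4*(A-1)) with hsdef
  set s' := Real.sqrt ((2*t' - A)^2 - 4*(A-1)) with hsdef'
  have hs0 : 0 ≤ s := Real.sqrt_nonneg _
  have hs0' : 0 ≤ s' := Real.sqrt_nonneg _
  have hs2 : s^2 = (2*t - A)^2 - 4*(A-1) := Real.sq_sqrt hw
  have hs2' : s'^2 = (2*t' - A)^2 - 4*(A-1) := Real.sq_sqrt hw'
  constructor
  · apply div_nonneg (by linarith) (by linarith)
  · rw [div_le_div_iff₀ (by linarith) (by linarith)]
    have hAt : A^2 + 2*A*Real.sqrt (A-1) ≤ 2*A*t := by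
      nlinarith [mul_le_mul_of_nonneg_left ht (by linarith : (0:ℝ) ≤ 2*A)]
    have hb : 0 ≤ 2*A*t - (A-2)^2 := by
      nlinarith [mul_nonneg (by linarith : (0:ℝ) ≤ A) (by linarith : (0:ℝ) ≤ Real.sqrt (A-1))]
    have hb' : 0 ≤ 2*A*t' - (A-2)^2 := by nlinarith [mul_nonneg (by linarith : (0:ℝ) ≤ A) (by linarith : (0:ℝ) ≤ t' - t)]
    have hd1 : (2*A*t - (A-2)^2)^2 - ((A-2)*s)^2 = 16*(A-1)*t^2 := by
      linear_combination (-(A-2)^2) * hs2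
    have hd1' : (2*A*t' - (A-2)^2)^2 - ((A-2)*s')^2 = 16*(A-1)*t'^2 := by
      linear_combination (-(A-2)^2) * hs2'
    have ha : 0 ≤ (A-2)*s := mul_nonneg (by linarith) hs0
    have ha' : 0 ≤ (A-2)*s' := mul_nonneg (by linarith) hs0'
    have key1 : (A-2)*s ≤ 2*A*t - (A-2)^2 :=
      sq_le_imp _ _ hb (by linarith [hd1, mul_nonneg (by linarith : (0:ℝ) ≤ A-1) (sq_nonneg t)])
    have key2 : (A-2)*s' ≤ 2*A*t' - (A-2)^2 :=
      sq_le_imp _ _ hb' (by linarith [hd1', mul_nonneg (by linarith : (0:ℝ) ≤ A-1) (sq_nonneg t')])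
    have hb1 : 0 ≤ 4*A*t*t' - (A-2)^2*(t+t') - (A-2)*(t*s'+t'*s) :=
      hb1_aux A t t' s s' (mul_le_mul_of_nonneg_left key1 ht0'.le)
        (mul_le_mul_of_nonneg_left key2 ht0.le)
    have keyeq : (t*s' + t'*s) * ((t*s' - t'*s) - (A-2)*(t'-t)) =
        (t'-t)*(4*A*t*t' - (A-2)^2*(t+t') - (A-2)*(t*s'+t'*s)) := by
      linear_combination t^2*hs2' - t'^2*hs2
    have key : 0 ≤ (t*s' + t'*s) * ((t*s' - t'*s) - (A-2)*(t'-t)) := by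
      rw [keyeq]; exact mul_nonneg (by linarith) hb1
    have hD : 0 ≤ t*s' - t'*s - (A-2)*(t'-t) := by
      rcases lt_or_ge 0 (t*s' + t'*s) with hP | hP
      · by_contra h
        push_neg at h
        have : (t*s' + t'*s) * ((t*s' - t'*s) - (A-2)*(t'-t)) < 0 :=
          mul_neg_of_pos_of_neg hP (by linarith)
        linarith
      · have hts : t'*s = 0 := le_antisymm (by linarith [mul_nonneg ht0.le hs0']) (mul_nonneg ht0'.le hs0)
        have hts' : t*s' = 0 := le_antisymm (by linarith [mul_nonneg ht0'.le hs0]) (mul_nonneg ht0.le hs0')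
        have hse : s = 0 := by
          rcases mul_eq_zero.mp hts with h | h
          · exact absurd h ht0'.ne'
          · exact h
        have hse' : s' = 0 := by
          rcases mul_eq_zero.mp hts' with h | h
          · exact absurd h ht0.ne'
          · exact h
        rw [hse] at hs2
        rw [hse'] at hs2'
        have h2 : 2 ≤ 2*t - A := by linarith
        have hz : (t'-t)*(t+t'-A) = 0 := by linear_combination (1/4)*hs2 - (1/4)*hs2'
        have hte : t' = t := by
          rcases mul_eq_zero.mp hz with h | h
          · linarith
          · linarith
        have : t*s' - t'*s - (A-2)*(t'-t) = 0 := by rw [hse, hse', hte]; ring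
        linarith
    exact final_aux A t t' s s' hD

lemma gBound_eq (m1 m2 : ℕ) (x t : ℝ) (hx : x ≠ 0) (hm : ((m1:ℝ)+m2) ≠ 0)
    (htx : t = ((m1:ℝ)+m2)*x)
    (hw : 0 ≤ (2*t - (m1:ℝ))^2 - 4*((m1:ℝ)-1)) :
    gBound m1 m2 x = ((Real.sqrt ((2*t - (m1:ℝ))^2 - 4*((m1:ℝ)-1)) + m1 - 2)/(2*t))^2 := by
  have ht0 : t ≠ 0 := by rw [htx]; exact mul_ne_zero hm hx
  set s := Real.sqrt ((2*t - (m1:ℝ))^2 - 4*((m1:ℝ)-1)) with hsdef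
  have hs2 : s^2 = (2*t - (m1:ℝ))^2 - 4*((m1:ℝ)-1) := Real.sq_sqrt hw
  have harg : (2 * ((m1:ℝ) + m2) * x - m1)^2 - 4*((m1:ℝ)-1)
      = (2*t - (m1:ℝ))^2 - 4*((m1:ℝ)-1) := by rw [htx]; ring
  calc gBound m1 m2 x
      = (s^2 + 2*((m1:ℝ)-2)*s + ((m1:ℝ)-2)^2)/(4*t^2) := by
        rw [hs2]
        unfold gBound
        rw [harg, ← hsdef, htx]
        field_simp
        ring
    _ = ((s + (m1:ℝ) - 2)/(2*t))^2 := by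
        rw [div_pow]
        congr 1
        · ring
        · ring

lemma pos_aux (b c d : ℝ) (h : d ≤ c * b) (hd : 0 < d) (hb : 0 < b) : 0 < c := by nlinarith

lemma lt_one_aux (b c u : ℝ) (h : c * b ≤ u) (hu : u < b) (hb : 0 < b) : c < 1 := by nlinarith

lemma half_aux (L c b : ℝ) (h : L ≤ c * (2 * b)) : L / 2 ≤ b * c := by nlinarith

lemma comp_aux (M x u v : ℝ) (h : x * (2 * M) ≤ u) (huv : 2 * M - u = v) :
    v / 2 ≤ M * (1 - x) := by nlinarith

lemma w_aux (A r t : ℝ) (hr : 0 ≤ r) (hr2 : r ^ 2 = A - 1) (h : (A + 2 * r) / 2 ≤ t) :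
    0 ≤ (2 * t - A) ^ 2 - 4 * (A - 1) := by nlinarith

/-- On the admissible interval, `g` is increasing and `x ↦ h(1-x)` is decreasing. -/
theorem gBound_monotone (m1 m2 : ℕ) (hm1 : 2 < m1) (hm2 : 2 < m2) :
    ∀ x x' : ℝ,
      x ∈ Set.Icc (((m1 : ℝ) + 2 * Real.sqrt ((m1 : ℝ) - 1)) / (2 * ((m1 : ℝ) + m2)))
        ((2 * (m1 : ℝ) + m2 - 2 * Real.sqrt ((m2 : ℝ) - 1)) / (2 * ((m1 : ℝ) + m2))) →
      x' ∈ Set.Icc (((m1 : ℝ) + 2 * Real.sqrt ((m1 : ℝ) - 1)) / (2 * ((m1 : ℝ) + m2)))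
        ((2 * (m1 : ℝ) + m2 - 2 * Real.sqrt ((m2 : ℝ) - 1)) / (2 * ((m1 : ℝ) + m2))) →
      x ≤ x' →
      gBound m1 m2 x ≤ gBound m1 m2 x' ∧
        gBound m2 m1 (1 - x') ≤ gBound m2 m1 (1 - x) := by
  intro x x' hx hx' hxx
  obtain ⟨hx1, hx2⟩ := hx
  obtain ⟨hx1', hx2'⟩ := hx'
  have hm1' : (3:ℝ) ≤ m1 := by exact_mod_cast hm1
  have hm2' : (3:ℝ) ≤ m2 := by exact_mod_cast hm2
  have hM0 : (0:ℝ) < (m1:ℝ) + m2 := by linarith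
  have hM0' : (0:ℝ) < (m2:ℝ) + m1 := by linarith
  have hq1 : 1 ≤ Real.sqrt ((m1:ℝ)-1) := by
    have := Real.sqrt_le_sqrt (by linarith : (1:ℝ) ≤ (m1:ℝ)-1)
    rwa [Real.sqrt_one] at this
  have hq2 : 1 ≤ Real.sqrt ((m2:ℝ)-1) := by
    have := Real.sqrt_le_sqrt (by linarith : (1:ℝ) ≤ (m2:ℝ)-1)
    rwa [Real.sqrt_one] at this
  have hq1sq : Real.sqrt ((m1:ℝ)-1)^2 = (m1:ℝ)-1 := Real.sq_sqrt (by linarith)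
  have hq2sq : Real.sqrt ((m2:ℝ)-1)^2 = (m2:ℝ)-1 := Real.sq_sqrt (by linarith)
  have hlow : ((m1:ℝ) + 2 * Real.sqrt ((m1:ℝ) - 1)) ≤ x * (2 * ((m1:ℝ) + m2)) :=
    (div_le_iff₀ (by linarith)).mp hx1
  have hlow' : ((m1:ℝ) + 2 * Real.sqrt ((m1:ℝ) - 1)) ≤ x' * (2 * ((m1:ℝ) + m2)) :=
    (div_le_iff₀ (by linarith)).mp hx1'
  have hup : x * (2 * ((m1:ℝ) + m2)) ≤ 2 * (m1:ℝ) + m2 - 2 * Real.sqrt ((m2:ℝ) - 1) :=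
    (le_div_iff₀ (by linarith)).mp hx2
  have hup' : x' * (2 * ((m1:ℝ) + m2)) ≤ 2 * (m1:ℝ) + m2 - 2 * Real.sqrt ((m2:ℝ) - 1) :=
    (le_div_iff₀ (by linarith)).mp hx2'
  have hx0 : (0:ℝ) < x := pos_aux _ _ _ hlow (by linarith) (by linarith)
  have hx0' : (0:ℝ) < x' := pos_aux _ _ _ hlow' (by linarith) (by linarith)
  have hxlt : x < 1 := lt_one_aux _ _ _ hup (by linarith) (by linarith)
  have hxlt' : x' < 1 := lt_one_aux _ _ _ hup' (by linarith) (by linarith)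
  have h1x : (0:ℝ) < 1 - x := by linarith
  have h1x' : (0:ℝ) < 1 - x' := by linarith
  -- part 1 : g increasing
  have ht : ((m1:ℝ) + 2*Real.sqrt ((m1:ℝ)-1))/2 ≤ ((m1:ℝ)+m2)*x := half_aux _ _ _ hlow
  have ht' : ((m1:ℝ) + 2*Real.sqrt ((m1:ℝ)-1))/2 ≤ ((m1:ℝ)+m2)*x' := half_aux _ _ _ hlow'
  have htt : ((m1:ℝ)+m2)*x ≤ ((m1:ℝ)+m2)*x' := mul_le_mul_of_nonneg_left hxx hM0.le
  have hA1 : (2:ℝ) ≤ (m1:ℝ) := by linarith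
  have hA2 : (2:ℝ) ≤ (m2:ℝ) := by linarith
  obtain ⟨hf0, hfle⟩ := keyMono (m1:ℝ) (((m1:ℝ)+m2)*x) (((m1:ℝ)+m2)*x') hA1 ht htt
  have hw : 0 ≤ (2*(((m1:ℝ)+m2)*x) - (m1:ℝ))^2 - 4*((m1:ℝ)-1) :=
    w_aux _ _ _ (Real.sqrt_nonneg _) hq1sq ht
  have hw' : 0 ≤ (2*(((m1:ℝ)+m2)*x') - (m1:ℝ))^2 - 4*((m1:ℝ)-1) :=
    w_aux _ _ _ (Real.sqrt_nonneg _) hq1sq ht' 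
  -- part 2 : h(1-·) decreasing
  have hMM : (m2:ℝ)+m1 = (m1:ℝ)+m2 := by ring
  have ht2 : ((m2:ℝ) + 2*Real.sqrt ((m2:ℝ)-1))/2 ≤ ((m2:ℝ)+m1)*(1-x') := by
    rw [hMM]
    exact comp_aux _ _ _ _ hup' (by ring)
  have ht2' : ((m2:ℝ) + 2*Real.sqrt ((m2:ℝ)-1))/2 ≤ ((m2:ℝ)+m1)*(1-x) := by
    rw [hMM]
    exact comp_aux _ _ _ _ hup (by ring)
  have htt2 : ((m2:ℝ)+m1)*(1-x') ≤ ((m2:ℝ)+m1)*(1-x) :=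
    mul_le_mul_of_nonneg_left (by linarith) hM0'.le
  obtain ⟨hg0, hgle⟩ := keyMono (m2:ℝ) (((m2:ℝ)+m1)*(1-x')) (((m2:ℝ)+m1)*(1-x)) hA2 ht2 htt2
  have hv : 0 ≤ (2*(((m2:ℝ)+m1)*(1-x')) - (m2:ℝ))^2 - 4*((m2:ℝ)-1) :=
    w_aux _ _ _ (Real.sqrt_nonneg _) hq2sq ht2
  have hv' : 0 ≤ (2*(((m2:ℝ)+m1)*(1-x)) - (m2:ℝ))^2 - 4*((m2:ℝ)-1) :=
    w_aux _ _ _ (Real.sqrt_nonneg _) hq2sq ht2' 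
  constructor
  · rw [gBound_eq m1 m2 x (((m1:ℝ)+m2)*x) hx0.ne' hM0.ne' rfl hw,
      gBound_eq m1 m2 x' (((m1:ℝ)+m2)*x') hx0'.ne' hM0.ne' rfl hw']
    exact pow_le_pow_left₀ hf0 hfle 2
  · rw [gBound_eq m2 m1 (1-x') (((m2:ℝ)+m1)*(1-x')) h1x'.ne' hM0'.ne' rfl hv,
      gBound_eq m2 m1 (1-x) (((m2:ℝ)+m1)*(1-x)) h1x.ne' hM0'.ne' rfl hv']
    exact pow_le_pow_left₀ hg0 hgle 2
end

section
/- Let $m_1, m_2 > 2$ be integers, $m = m_1 + m_2$, and $x_0 = \frac{3m_1 + m_2 - 4}{4(m-2)}$. With $g$ and $h$ defined by $g(x) = \frac{(m_1-2)^2 - 2m_1^2}{2m^2 x^2} + \frac{m_1}{m x} + \frac{(m_1-2)\sqrt{(2mx - m_1)^2 - 4(m_1-1)}}{2m^2 x^2} + \frac{1}{m^2}\left(m - \frac{m_1}{x}\right)^2$ and $h(y) = \frac{(m_2-2)^2 - 2m_2^2}{2m^2 y^2} + \frac{m_2}{m y} + \frac{(m_2-2)\sqrt{(2my - m_2)^2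 - 4(m_2-1)}}{2m^2 y^2} + \frac{1}{m^2}\left(m - \frac{m_2}{y}\right)^2$, one has $g(x_0) = h(1 - x_0) = \frac{(m-4)^2}{m^2}$. -/
private lemma keyR (a b : ℝ) (ha : 3 ≤ a) (hb : 3 ≤ b) :
    ((a - 2) ^ 2 - 2 * a ^ 2) /
        (2 * (a + b) ^ 2 * ((3 * a + b - 4) / (4 * (a + b - 2))) ^ 2) +
      a / ((a + b) * ((3 * a + b - 4) / (4 * (a + b - 2)))) +
      (a - 2) *
          Real.sqrt
            ((2 * (a + b) * ((3 * a + b - 4) / (4 * (a + b - 2))) - a) ^ 2 - 4 * (a - 1)) /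
        (2 * (a + b) ^ 2 * ((3 * a + b - 4) / (4 * (a + b - 2))) ^ 2) +
      (1 / (a + b) ^ 2) * ((a + b) - a / ((3 * a + b - 4) / (4 * (a + b - 2)))) ^ 2 =
      (a + b - 4) ^ 2 / (a + b) ^ 2 := by
  have hd : (0:ℝ) < a + b - 2 := by linarith
  have hx : (0:ℝ) < 3 * a + b - 4 := by linarith
  have hm : (0:ℝ) < a + b := by linarith
  have hc : (0:ℝ) ≤ (a + b) ^ 2 - 8 * a - 4 * b + 8 := by nlinarith [sq_nonneg (a + b - 4)]
  have hs : (2 * (a + b) * ((3 * a + b - 4) / (4 * (a + b - 2))) - a) ^ 2 - 4 * (a - 1) =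
      (((a + b) ^ 2 - 8 * a - 4 * b + 8) / (2 * (a + b - 2))) ^ 2 := by
    field_simp
    ring
  rw [hs, Real.sqrt_sq (div_nonneg hc (by linarith))]
  have hx' : (a * 3 + b - 4) ≠ 0 := by linarith
  have hd' : (a + b - 2) ≠ 0 := hd.ne'
  have hm' : (a + b) ≠ 0 := hm.ne'
  field_simp
  ring

/-- At `x₀ = (3m₁ + m₂ - 4)/(4(m-2))` both bounds equal `(m-4)²/m²`. -/
theorem gBound_at_extremal_radius (m1 m2 : ℕ) (hm1 : 2 < m1) (hm2 : 2 < m2) :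
    gBound m1 m2 ((3 * (m1 : ℝ) + m2 - 4) / (4 * ((m1 : ℝ) + m2 - 2))) =
        (((m1 : ℝ) + m2) - 4) ^ 2 / ((m1 : ℝ) + m2) ^ 2 ∧
    gBound m2 m1 (1 - (3 * (m1 : ℝ) + m2 - 4) / (4 * ((m1 : ℝ) + m2 - 2))) =
        (((m1 : ℝ) + m2) - 4) ^ 2 / ((m1 : ℝ) + m2) ^ 2 := by
  have ha : (3:ℝ) ≤ (m1 : ℝ) := by exact_mod_cast hm1
  have hb : (3:ℝ) ≤ (m2 : ℝ) := by exact_mod_cast hm2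
  have hd : (0:ℝ) < (m1:ℝ) + m2 - 2 := by linarith
  constructor
  · exact keyR (m1:ℝ) (m2:ℝ) ha hb
  · have h1 : 1 - (3 * (m1 : ℝ) + m2 - 4) / (4 * ((m1 : ℝ) + m2 - 2)) =
        (3 * (m2 : ℝ) + m1 - 4) / (4 * ((m2 : ℝ) + m1 - 2)) := by
      rw [eq_div_iff (by linarith)]
      field_simp
      ring
    rw [h1]
    have := keyR (m2:ℝ) (m1:ℝ) hb ha
    unfold gBound
    rw [this]
    ring_nf
end

section
/- Let $m_1, m_2 > 2$ be integers and $m = m_1 + m_2$. With $g$ and $h$ defined by $g(x) = \frac{(m_1-2)^2 - 2m_1^2}{2m^2 x^2} + \frac{m_1}{m x} + \frac{(m_1-2)\sqrt{(2mx - m_1)^2 - 4(m_1-1)}}{2m^2 x^2} + \frac{1}{m^2}\left(m - \frac{m_1}{x}\right)^2$ and $h(y) = \frac{(m_2-2)^2 - 2m_2^2}{2m^2 y^2} + \frac{m_2}{m y} + \frac{(m_2-2)\sqrt{(2my - m_2)^2 - 4(m_2-1)}}{2m^2 y^2} + \frac{1}{m^2}\left(m - \frac{m_2}{y}\right)^2$,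 for every $x \in \left[\frac{m_1 + 2\sqrt{m_1-1}}{2m}, \frac{2m_1 + m_2 - 2\sqrt{m_2-1}}{2m}\right]$ one has $\min\{g(x), h(1-x)\} \le \frac{(m-4)^2}{m^2}$. -/
private lemma aux_nonneg (r c d : ℝ) (h : 0 ≤ c * r * d) (hc : 0 < c) (hd : 0 < d) :
    0 ≤ r := by
  by_contra hr
  push_neg at hr
  nlinarith [mul_pos hc hd]

set_option maxHeartbeats 1000000 in
private lemma stepA (a b x s : ℝ) (ha : 3 ≤ a) (ha' : a = s ^ 2 + 1) (hs1 : 1 ≤ s) (hb : 3 ≤ b)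
    (hE1 : 0 ≤ 2 * (a + b) * x - (a + 2 * s))
    (hE2 : 0 ≤ (a + b) * (3 * a + b - 4) - 4 * (a + b - 2) * (a + b) * x) :
    0 ≤ 2 * a * (a + b) * x - (a - 2) ^ 2 - 16 * (a + b - 2) * x ^ 2 := by
  have hm : (6:ℝ) ≤ a + b := by linarith
  have hs0 : 0 ≤ s := by linarith
  have hV1 : 0 < s * (a + b) ^ 2 - 2 * (a + b - 2) * (a + 2 * s) := by
    have h1 : 0 < (a + b - 2) - 2 * s := by nlinarith
    have h2 : 0 < s * (a + b - 2) - 2 := by nlinarith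
    nlinarith [mul_pos h1 h2]
  have hV2 : 0 < (a + b) ^ 2 - 4 * (a + b) - 4 * a + 8 := by
    nlinarith [sq_nonneg (a + b - 4)]
  have hΔ : 0 ≤ 2 * (a + b - 2) * (2 * (a + b) * x - (a + 2 * s)) +
      ((a + b) * (3 * a + b - 4) - 4 * (a + b - 2) * (a + b) * x) := by
    have h4 : (0:ℝ) ≤ a + b - 2 := by linarith
    have := mul_nonneg h4 hE1
    nlinarith [this, hE2]
  rcases eq_or_lt_of_le hΔ with hΔ0 | hΔpos
  · have hE1z : 2 * (a + b) * x - (a + 2 * s) = 0 :=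
      le_antisymm (by nlinarith [hΔ0, hE2]) hE1
    have hkey : (a + b) ^ 2 * (2 * a * (a + b) * x - (a - 2) ^ 2 - 16 * (a + b - 2) * x ^ 2) =
        2 * (a + 2 * s) * (s * (a + b) ^ 2 - 2 * (a + b - 2) * (a + 2 * s)) +
        (2 * (a + b) * x - (a + 2 * s)) *
          (a * (a + b) ^ 2 - 4 * (a + b - 2) * (2 * (a + b) * x + a + 2 * s)) := by
      rw [ha']; ring
    rw [hE1z, zero_mul, add_zero] at hkey
    refine aux_nonneg _ ((a + b) ^ 2) 1 ?_ (by positivity) one_pos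
    rw [mul_one, hkey]
    have : (0:ℝ) ≤ 2 * (a + 2 * s) := by linarith
    exact mul_nonneg this hV1.le
  · have hkey : (a + b) ^ 2 * (2 * a * (a + b) * x - (a - 2) ^ 2 - 16 * (a + b - 2) * x ^ 2) *
        (2 * (a + b - 2) * (2 * (a + b) * x - (a + 2 * s)) +
          ((a + b) * (3 * a + b - 4) - 4 * (a + b - 2) * (a + b) * x)) =
        2 * (a + 2 * s) * (s * (a + b) ^ 2 - 2 * (a + b - 2) * (a + 2 * s)) *
          ((a + b) * (3 * a + b - 4) - 4 * (a + b - 2) * (a + b) * x) +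
        (a - 2) * (a + b) ^ 2 * ((a + b) ^ 2 - 4 * (a + b) - 4 * a + 8) *
          (2 * (a + b) * x - (a + 2 * s)) +
        2 * (2 * (a + b) * x - (a + 2 * s)) *
          ((a + b) * (3 * a + b - 4) - 4 * (a + b - 2) * (a + b) * x) *
          (2 * (a + b - 2) * (2 * (a + b) * x - (a + 2 * s)) +
            ((a + b) * (3 * a + b - 4) - 4 * (a + b - 2) * (a + b) * x)) := by
      rw [ha']; ring
    refine aux_nonneg _ ((a + b) ^ 2) _ ?_ (by positivity) hΔpos
    rw [hkey]
    have h1 : 0 ≤ 2 * (a + 2 * s) * (s * (a + b) ^ 2 - 2 * (a + b - 2) * (a + 2 * s)) *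
        ((a + b) * (3 * a + b - 4) - 4 * (a + b - 2) * (a + b) * x) :=
      mul_nonneg (mul_nonneg (by linarith) hV1.le) hE2
    have h2 : 0 ≤ (a - 2) * (a + b) ^ 2 * ((a + b) ^ 2 - 4 * (a + b) - 4 * a + 8) *
        (2 * (a + b) * x - (a + 2 * s)) :=
      mul_nonneg (mul_nonneg (mul_nonneg (by linarith) (by positivity)) hV2.le) hE1
    have h3 : 0 ≤ 2 * (2 * (a + b) * x - (a + 2 * s)) *
        ((a + b) * (3 * a + b - 4) - 4 * (a + b - 2) * (a + b) * x) *
        (2 * (a + b - 2) * (2 * (a + b) * x - (a + 2 * s)) +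
          ((a + b) * (3 * a + b - 4) - 4 * (a + b - 2) * (a + b) * x)) :=
      mul_nonneg (mul_nonneg (by linarith) hE2) hΔ
    linarith

set_option maxHeartbeats 1000000 in
private lemma stepB (a b x : ℝ) (ha : 3 ≤ a) (hb : 3 ≤ b) (hx0 : 0 < x)
    (hx2 : x * (4 * (a + b - 2)) ≤ 3 * a + b - 4) :
    (a - 2) ^ 2 * ((2 * (a + b) * x - a) ^ 2 - 4 * (a - 1)) ≤
      (2 * a * (a + b) * x - (a - 2) ^ 2 - 16 * (a + b - 2) * x ^ 2) ^ 2 := by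
  have hm : (6:ℝ) ≤ a + b := by linarith
  have hQ : (a - 2) * ((a + b) - 4) * (a + b) ≤
      a * (a + b) ^ 2 - 8 * (a + b - 2) * (a + b) * x := by nlinarith [hx2]
  have hQ0 : (0:ℝ) ≤ (a - 2) * ((a + b) - 4) * (a + b) := by
    have h1 : (0:ℝ) ≤ a - 2 := by linarith
    have h2 : (0:ℝ) ≤ (a + b) - 4 := by linarith
    have h3 : (0:ℝ) ≤ a + b := by linarith
    positivity
  have hQsq : ((a - 2) * ((a + b) - 4) * (a + b)) ^ 2 ≤
      (a * (a + b) ^ 2 - 8 * (a + b - 2) * (a + b) * x) ^ 2 := by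
    have := mul_self_le_mul_self hQ0 hQ
    nlinarith [this]
  have hident : (a + b) ^ 2 *
      ((2 * a * (a + b) * x - (a - 2) ^ 2 - 16 * (a + b - 2) * x ^ 2) ^ 2 -
        (a - 2) ^ 2 * ((2 * (a + b) * x - a) ^ 2 - 4 * (a - 1))) =
      4 * x ^ 2 * ((a * (a + b) ^ 2 - 8 * (a + b - 2) * (a + b) * x) ^ 2 -
        ((a - 2) * ((a + b) - 4) * (a + b)) ^ 2) := by ring
  have h4 : 0 ≤ 4 * x ^ 2 * ((a * (a + b) ^ 2 - 8 * (a + b - 2) * (a + b) * x) ^ 2 -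
      ((a - 2) * ((a + b) - 4) * (a + b)) ^ 2) :=
    mul_nonneg (by positivity) (by linarith)
  rw [← hident] at h4
  have := aux_nonneg _ ((a + b) ^ 2) 1 (by rw [mul_one]; exact h4) (by positivity) one_pos
  linarith

set_option maxHeartbeats 1000000 in
lemma core_ineq (a b x s S : ℝ) (ha : 3 ≤ a) (hb : 3 ≤ b)
    (hs0 : 0 ≤ s) (hs2 : s ^ 2 = a - 1) (hS0 : 0 ≤ S)
    (hS2 : S ^ 2 = (2 * (a + b) * x - a) ^ 2 - 4 * (a - 1))
    (hx1 : a + 2 * s ≤ 2 * (a + b) * x)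
    (hx2 : x * (4 * (a + b - 2)) ≤ 3 * a + b - 4) :
    ((a - 2) ^ 2 - 2 * a ^ 2) / (2 * (a + b) ^ 2 * x ^ 2) + a / ((a + b) * x) +
      (a - 2) * S / (2 * (a + b) ^ 2 * x ^ 2) +
      (1 / (a + b) ^ 2) * ((a + b) - a / x) ^ 2 ≤
    ((a + b) - 4) ^ 2 / (a + b) ^ 2 := by
  have ha' : a = s ^ 2 + 1 := by linarith
  have hs1 : 1 ≤ s := by nlinarith
  have hx0 : 0 < x := by nlinarith [hx1]
  have hm : (6:ℝ) ≤ a + b := by linarith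
  have hE1 : 0 ≤ 2 * (a + b) * x - (a + 2 * s) := by linarith
  have hE2 : 0 ≤ (a + b) * (3 * a + b - 4) - 4 * (a + b - 2) * (a + b) * x := by
    nlinarith [hx2]
  have hRx := stepA a b x s ha ha' hs1 hb hE1 hE2
  have hB := stepB a b x ha hb hx0 hx2
  have ha2 : (0:ℝ) < a - 2 := by linarith
  have hC : (a - 2) * S ≤ 2 * a * (a + b) * x - (a - 2) ^ 2 - 16 * (a + b - 2) * x ^ 2 := by
    have h1 : S ^ 2 ≤ ((2 * a * (a + b) * x - (a - 2) ^ 2 - 16 * (a + b - 2) * x ^ 2) / (a - 2)) ^ 2 := by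
      rw [div_pow, le_div_iff₀ (by positivity)]
      nlinarith [hB, hS2]
    have hSle : S ≤ (2 * a * (a + b) * x - (a - 2) ^ 2 - 16 * (a + b - 2) * x ^ 2) / (a - 2) := by
      calc S = Real.sqrt (S ^ 2) := (Real.sqrt_sq hS0).symm
        _ ≤ Real.sqrt (((2 * a * (a + b) * x - (a - 2) ^ 2 - 16 * (a + b - 2) * x ^ 2) / (a - 2)) ^ 2) :=
            Real.sqrt_le_sqrt h1
        _ = _ := Real.sqrt_sq (div_nonneg hRx ha2.le)
    calc (a - 2) * S ≤ (a - 2) *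
          ((2 * a * (a + b) * x - (a - 2) ^ 2 - 16 * (a + b - 2) * x ^ 2) / (a - 2)) :=
          mul_le_mul_of_nonneg_left hSle ha2.le
      _ = _ := mul_div_cancel₀ _ (by linarith)
  have hmne : a + b ≠ 0 := by linarith
  have hxne : x ≠ 0 := ne_of_gt hx0
  have hfin : ((a + b) - 4) ^ 2 / (a + b) ^ 2 -
      (((a - 2) ^ 2 - 2 * a ^ 2) / (2 * (a + b) ^ 2 * x ^ 2) + a / ((a + b) * x) +
      (a - 2) * S / (2 * (a + b) ^ 2 * x ^ 2) +
      (1 / (a + b) ^ 2) * ((a + b) - a / x) ^ 2) =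
      ((2 * a * (a + b) * x - (a - 2) ^ 2 - 16 * (a + b - 2) * x ^ 2) - (a - 2) * S) /
        (2 * (a + b) ^ 2 * x ^ 2) := by
    field_simp
    ring
  rw [← sub_nonneg, hfin]
  exact div_nonneg (by linarith) (by positivity)


lemma gBound_le (m1 m2 : ℕ) (hm1 : 2 < m1) (hm2 : 2 < m2) (x : ℝ)
    (hx1 : ((m1 : ℝ) + 2 * Real.sqrt ((m1 : ℝ) - 1)) / (2 * ((m1 : ℝ) + m2)) ≤ x)
    (hx2 : x * (4 * ((m1 : ℝ) + (m2 : ℝ) - 2)) ≤ 3 * (m1 : ℝ) + (m2 : ℝ) - 4) :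
    gBound m1 m2 x ≤ (((m1 : ℝ) + m2) - 4) ^ 2 / ((m1 : ℝ) + m2) ^ 2 := by
  have ha : (3:ℝ) ≤ (m1 : ℝ) := by exact_mod_cast hm1
  have hb : (3:ℝ) ≤ (m2 : ℝ) := by exact_mod_cast hm2
  have hs0 : 0 ≤ Real.sqrt ((m1 : ℝ) - 1) := Real.sqrt_nonneg _
  have hs2 : Real.sqrt ((m1 : ℝ) - 1) ^ 2 = (m1 : ℝ) - 1 := Real.sq_sqrt (by linarith)
  rw [div_le_iff₀ (by linarith : (0:ℝ) < 2 * ((m1 : ℝ) + m2))] at hx1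
  have hx1' : (m1 : ℝ) + 2 * Real.sqrt ((m1 : ℝ) - 1) ≤ 2 * ((m1 : ℝ) + m2) * x := by
    linarith
  have hD : 0 ≤ (2 * ((m1 : ℝ) + m2) * x - m1) ^ 2 - 4 * ((m1 : ℝ) - 1) := by
    nlinarith [hs2, hx1', hs0]
  have hS2 : Real.sqrt ((2 * ((m1 : ℝ) + m2) * x - m1) ^ 2 - 4 * ((m1 : ℝ) - 1)) ^ 2 =
      (2 * ((m1 : ℝ) + m2) * x - m1) ^ 2 - 4 * ((m1 : ℝ) - 1) := Real.sq_sqrt hD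
  simp only [gBound]
  exact core_ineq (m1 : ℝ) (m2 : ℝ) x _ _ ha hb hs0 hs2 (Real.sqrt_nonneg _) hS2 hx1' hx2

/-- Analytic core of the main gap theorem: on the admissible interval,
`min{g(x), h(1-x)} ≤ (m-4)²/m²`. -/
theorem min_gBound_le (m1 m2 : ℕ) (hm1 : 2 < m1) (hm2 : 2 < m2) :
    ∀ x : ℝ,
      x ∈ Set.Icc (((m1 : ℝ) + 2 * Real.sqrt ((m1 : ℝ) - 1)) / (2 * ((m1 : ℝ) + m2)))
        ((2 * (m1 : ℝ) + m2 - 2 * Real.sqrt ((m2 : ℝ) - 1)) / (2 * ((m1 : ℝ) + m2))) →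
      min (gBound m1 m2 x) (gBound m2 m1 (1 - x)) ≤
        (((m1 : ℝ) + m2) - 4) ^ 2 / ((m1 : ℝ) + m2) ^ 2 := by
  intro x hx
  obtain ⟨hx1, hx2⟩ := hx
  have ha : (3:ℝ) ≤ (m1 : ℝ) := by exact_mod_cast hm1
  have hb : (3:ℝ) ≤ (m2 : ℝ) := by exact_mod_cast hm2
  by_cases hc : x * (4 * ((m1 : ℝ) + (m2 : ℝ) - 2)) ≤ 3 * (m1 : ℝ) + (m2 : ℝ) - 4
  · exact (min_le_left _ _).trans (gBound_le m1 m2 hm1 hm2 x hx1 hc)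
  · refine (min_le_right _ _).trans ?_
    push_neg at hc
    rw [le_div_iff₀ (by linarith : (0:ℝ) < 2 * ((m1 : ℝ) + m2))] at hx2
    have h1 : ((m2 : ℝ) + 2 * Real.sqrt ((m2 : ℝ) - 1)) / (2 * ((m2 : ℝ) + m1)) ≤ 1 - x := by
      rw [div_le_iff₀ (by linarith : (0:ℝ) < 2 * ((m2 : ℝ) + m1))]
      linarith
    have h2 : (1 - x) * (4 * ((m2 : ℝ) + (m1 : ℝ) - 2)) ≤ 3 * (m2 : ℝ) + (m1 : ℝ) - 4 := by
      linarith
    have h := gBound_le m2 m1 hm2 hm1 (1 - x) h1 h2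
    have hcomm : (m2 : ℝ) + (m1 : ℝ) = (m1 : ℝ) + (m2 : ℝ) := add_comm _ _
    rw [hcomm] at h
    exact h
end
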